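/- arXiv:math/9605207 — 7 statements merged into one kernel-verified Lean document; each statement's English description precedes it below -/
import Mathlib

section
/- Every element u of the augmentation ideal Δ of the integral group ring ZF of a free group F of rank n can be uniquely written as u = Σ_{i=1}^n d_i(u)(x_i - 1), where d_i(u) ∈ ZF are the (left) Fox derivatives of u. -/
/-- The augmentation homomorphism `ZF → Z`. -/
noncomputable def aug (n : ℕ) :
    MonoidAlgebra ℤ (FreeGroup (Fin n)) →ₐ[ℤ] ℤ :=
  MonoidAlgebra.lift ℤ ℤ (FreeGroup (Fin n)) 1

open MonoidAlgebra

noncomputable abbrev RF (n : ℕ) := MonoidAlgebra ℤ (FreeGroup (Fin n))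

noncomputable def foxUnit (n : ℕ) (i j : Fin n) : (Matrix (Fin 2) (Fin 2) (RF n))ˣ where
  val := !![of ℤ (FreeGroup (Fin n)) (FreeGroup.of j), if j = i then 1 else 0; 0, 1]
  inv := !![of ℤ (FreeGroup (Fin n)) (FreeGroup.of j)⁻¹,
      -(of ℤ (FreeGroup (Fin n)) (FreeGroup.of j)⁻¹ * if j = i then 1 else 0); 0, 1]
  val_inv := by
    ext a b : 2
    fin_cases a <;> fin_cases b <;>
      simp [Matrix.mul_apply, Fin.sum_univ_two, ← map_mul, mul_comm, ← MonoidAlgebra.one_def]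
  inv_val := by
    ext a b : 2
    fin_cases a <;> fin_cases b <;>
      simp [Matrix.mul_apply, Fin.sum_univ_two, ← map_mul, mul_comm, ← MonoidAlgebra.one_def]

lemma foxUnit_val (n : ℕ) (i j : Fin n) : (foxUnit n i j).val =
    !![of ℤ (FreeGroup (Fin n)) (FreeGroup.of j), if j = i then 1 else 0; 0, 1] := rfl

lemma foxUnit_inv_val (n : ℕ) (i j : Fin n) : ((foxUnit n i j)⁻¹).val =
    !![of ℤ (FreeGroup (Fin n)) (FreeGroup.of j)⁻¹,
      -(of ℤ (FreeGroup (Fin n)) (FreeGroup.of j)⁻¹ * if j = i then 1 else 0); 0, 1] := rfl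

noncomputable def foxAlg (n : ℕ) (i : Fin n) :
    MonoidAlgebra ℤ (FreeGroup (Fin n)) →ₐ[ℤ] Matrix (Fin 2) (Fin 2) (RF n) :=
  MonoidAlgebra.lift ℤ _ (FreeGroup (Fin n))
    ((Units.coeHom _).comp (FreeGroup.lift (foxUnit n i)))

lemma foxLift_entries (n : ℕ) (i : Fin n) (g : FreeGroup (Fin n)) :
    (FreeGroup.lift (foxUnit n i) g).val 0 0 = of ℤ (FreeGroup (Fin n)) g ∧
    (FreeGroup.lift (foxUnit n i) g).val 1 0 = 0 ∧
    (FreeGroup.lift (foxUnit n i) g).val 1 1 = 1 := by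
  induction g using FreeGroup.induction_on with
  | C1 => rw [map_one]; exact ⟨rfl, rfl, rfl⟩
  | of x =>
    rw [FreeGroup.lift_apply_of,
      foxUnit_val]
    exact ⟨rfl, rfl, rfl⟩
  | inv_of x _ =>
    rw [map_inv,
      FreeGroup.lift_apply_of, foxUnit_inv_val]
    exact ⟨rfl, rfl, rfl⟩
  | mul x y hx hy =>
    obtain ⟨hx1, hx2, hx3⟩ := hx
    obtain ⟨hy1, hy2, hy3⟩ := hy
    rw [map_mul]
    refine ⟨?_, ?_, ?_⟩ <;>
      simp [Units.val_mul, Matrix.mul_apply, Fin.sum_univ_two, hx1, hx2, hx3, hy1, hy2, hy3,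
        map_mul]

lemma foxAlg_of (n : ℕ) (i : Fin n) (g : FreeGroup (Fin n)) :
    foxAlg n i (of ℤ (FreeGroup (Fin n)) g) = (FreeGroup.lift (foxUnit n i) g).val := by
  simp [foxAlg, MonoidAlgebra.lift_of]

lemma foxAlg_apply_00 (n : ℕ) (i : Fin n) (a : MonoidAlgebra ℤ (FreeGroup (Fin n))) :
    (foxAlg n i a) 0 0 = a := by
  induction a using MonoidAlgebra.induction_on with
  | of g => rw [foxAlg_of]; exact (foxLift_entries n i g).1
  | add f g hf hg => rw [map_add]; simp [hf, hg]
  | smul r f hf => rw [map_zsmul]; simp [hf]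

lemma fox_formula (n : ℕ) (i : Fin n) (d : Fin n → MonoidAlgebra ℤ (FreeGroup (Fin n))) :
    (foxAlg n i (∑ j : Fin n, d j * (of ℤ (FreeGroup (Fin n)) (FreeGroup.of j) - 1))) 0 1
      = d i := by
  rw [map_sum, Matrix.sum_apply]
  have : ∀ j : Fin n,
      (foxAlg n i (d j * (of ℤ (FreeGroup (Fin n)) (FreeGroup.of j) - 1))) 0 1
        = if j = i then d j else 0 := by
    intro j
    rw [map_mul, map_sub, map_one, foxAlg_of, FreeGroup.lift_apply_of, foxUnit_val]
    rw [Matrix.mul_apply, Fin.sum_univ_two]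
    simp [foxAlg_apply_00, Matrix.one_fin_two]
  simp only [this]
  simp

lemma mem_span_gen (n : ℕ) (g : FreeGroup (Fin n)) :
    of ℤ (FreeGroup (Fin n)) g - 1 ∈ Submodule.span (MonoidAlgebra ℤ (FreeGroup (Fin n)))
      (Set.range fun i : Fin n => of ℤ (FreeGroup (Fin n)) (FreeGroup.of i) - 1) := by
  set I := Submodule.span (MonoidAlgebra ℤ (FreeGroup (Fin n)))
      (Set.range fun i : Fin n => of ℤ (FreeGroup (Fin n)) (FreeGroup.of i) - 1)
  have inv_mem : ∀ h : FreeGroup (Fin n), of ℤ (FreeGroup (Fin n)) h - 1 ∈ I →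
      of ℤ (FreeGroup (Fin n)) h⁻¹ - 1 ∈ I := by
    intro h hh
    have : of ℤ (FreeGroup (Fin n)) h⁻¹ - 1
        = -(of ℤ (FreeGroup (Fin n)) h⁻¹ * (of ℤ (FreeGroup (Fin n)) h - 1)) := by
      rw [mul_sub, ← map_mul]
      simp [MonoidAlgebra.one_def]
    rw [this]
    exact neg_mem (I.smul_mem _ hh)
  induction g using FreeGroup.induction_on with
  | C1 => rw [map_one, sub_self]; exact zero_mem I
  | of x => exact Submodule.subset_span ⟨x, rfl⟩
  | inv_of x hx => exact inv_mem _ hx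
  | mul x y hx hy =>
    have : of ℤ (FreeGroup (Fin n)) (x * y) - 1
        = of ℤ (FreeGroup (Fin n)) x * (of ℤ (FreeGroup (Fin n)) y - 1)
          + (of ℤ (FreeGroup (Fin n)) x - 1) := by
      rw [mul_sub, ← map_mul, mul_one]; abel
    rw [this]
    exact add_mem (I.smul_mem _ hy) hx

lemma ker_mem_span (n : ℕ) (u : MonoidAlgebra ℤ (FreeGroup (Fin n)))
    (hu : u ∈ RingHom.ker (aug n).toRingHom) :
    u ∈ Submodule.span (MonoidAlgebra ℤ (FreeGroup (Fin n)))
      (Set.range fun i : Fin n => of ℤ (FreeGroup (Fin n)) (FreeGroup.of i) - 1) := by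
  have haug : aug n u = 0 := hu
  have hrep : u = ∑ g ∈ u.coeff.support, (u.coeff g) • (of ℤ (FreeGroup (Fin n)) g - 1) := by
    have h1 : (∑ g ∈ u.coeff.support, (u.coeff g) • (of ℤ (FreeGroup (Fin n)) g : MonoidAlgebra ℤ _)) = u := by
      conv_rhs => rw [← MonoidAlgebra.sum_coeff_single u]
      rw [Finsupp.sum]
      refine Finset.sum_congr rfl fun g _ => ?_
      rw [MonoidAlgebra.of_apply, MonoidAlgebra.smul_single', mul_one]
    have h2 : (∑ g ∈ u.coeff.support, (u.coeff g : ℤ)) = aug n u := by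
      conv_rhs => rw [← MonoidAlgebra.sum_coeff_single u]
      rw [Finsupp.sum, map_sum]
      refine Finset.sum_congr rfl fun g _ => ?_
      rw [aug, MonoidAlgebra.lift_single]
      simp
    calc u = ∑ g ∈ u.coeff.support, (u.coeff g) • (of ℤ (FreeGroup (Fin n)) g : MonoidAlgebra ℤ _)
            - (∑ g ∈ u.coeff.support, (u.coeff g : ℤ)) • (1 : MonoidAlgebra ℤ (FreeGroup (Fin n))) := by
          rw [h1, h2, haug]; simp
      _ = _ := by rw [Finset.sum_smul, ← Finset.sum_sub_distrib]; simp [smul_sub]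
  rw [hrep]
  exact Submodule.sum_mem _ fun g _ => Submodule.smul_of_tower_mem _ _ (mem_span_gen n g)

/-- Every element `u` of the augmentation ideal `Δ` of `ZF` can be uniquely written as
`u = Σ_{i=1}^n d_i(u) (x_i - 1)` with coefficients `d_i(u) ∈ ZF` (the left Fox
derivatives of `u`). -/
theorem stmt5 (n : ℕ) (u : MonoidAlgebra ℤ (FreeGroup (Fin n)))
    (hu : u ∈ RingHom.ker (aug n).toRingHom) :
    ∃! d : Fin n → MonoidAlgebra ℤ (FreeGroup (Fin n)),
      u = ∑ i : Fin n, d i *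
        (MonoidAlgebra.of ℤ (FreeGroup (Fin n)) (FreeGroup.of i) - 1) := by
  obtain ⟨c, hc⟩ := (Submodule.mem_span_range_iff_exists_fun _).mp (ker_mem_span n u hu)
  refine ⟨c, ?_, ?_⟩
  · rw [← hc]
    exact Finset.sum_congr rfl fun i _ => (smul_eq_mul _ _).symm
  · intro d' hd'
    funext i
    have h1 := fox_formula n i d'
    have h2 := fox_formula n i c
    rw [← hd'] at h1
    have hc' : u = ∑ j : Fin n, c j *
        (MonoidAlgebra.of ℤ (FreeGroup (Fin n)) (FreeGroup.of j) - 1) := by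
      rw [← hc]; exact Finset.sum_congr rfl fun j _ => (smul_eq_mul _ _).symm
    rw [← hc'] at h2
    rw [← h1, ← h2]
end

section
/- Let R be a normal subgroup of a free group F, let Δ_R be the two-sided ideal of ZF generated by {r - 1 : r ∈ R}, and let Δ be the augmentation ideal. Then for y ∈ F, one has y - 1 ∈ Δ_R·Δ if and only if y ∈ R', the commutator subgroup of R. -/
open Finsupp MonoidAlgebra
open scoped commutatorElement

namespace Stmt7Aux

variable {ι : Type*} (R : Subgroup (FreeGroup ι)) [R.Normal]

noncomputable def rp (f : FreeGroup ι) : R :=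
  ⟨f * (Quotient.out (QuotientGroup.mk f : FreeGroup ι ⧸ R))⁻¹, by
    rw [← QuotientGroup.eq_one_iff]
    simp [QuotientGroup.out_eq']⟩

noncomputable def φ (f : FreeGroup ι) : Additive (Abelianization R) :=
  Additive.ofMul (Abelianization.of (rp R f))

noncomputable def η (c : FreeGroup ι ⧸ R) (w : FreeGroup ι) : Additive (Abelianization R) :=
  Additive.ofMul (Abelianization.of
    (⟨Quotient.out c * w * (Quotient.out (c * QuotientGroup.mk w))⁻¹, by
      rw [← QuotientGroup.eq_one_iff]
      simp [QuotientGroup.out_eq']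
      ⟩ : R))

lemma φ_mul (f w : FreeGroup ι) : φ R (f * w) = φ R f + η R (QuotientGroup.mk f) w := by
  unfold φ η rp
  rw [← ofMul_mul, ← map_mul]
  refine congrArg _ (congrArg _ (Subtype.ext ?_))
  show f * w * _⁻¹ = (f * _⁻¹) * (_ * w * _⁻¹)
  have h : (QuotientGroup.mk (f * w) : FreeGroup ι ⧸ R) = QuotientGroup.mk f * QuotientGroup.mk w := rfl
  rw [h]
  group

noncomputable def θ : MonoidAlgebra ℤ (FreeGroup ι) →+ Additive (Abelianization R) :=
  (Finsupp.liftAddHom fun f => zmultiplesHom _ (φ R f)).comp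
    (MonoidAlgebra.coeffAddEquiv).toAddMonoidHom

noncomputable def Θ (w : FreeGroup ι) :
    MonoidAlgebra ℤ (FreeGroup ι ⧸ R) →+ Additive (Abelianization R) :=
  (Finsupp.liftAddHom fun c => zmultiplesHom _ (η R c w)).comp
    (MonoidAlgebra.coeffAddEquiv).toAddMonoidHom

lemma θ_single (f : FreeGroup ι) (n : ℤ) : θ R (MonoidAlgebra.single f n) = n • φ R f :=
  Finsupp.liftAddHom_apply_single _ _ _

lemma Θ_single (w : FreeGroup ι) (c : FreeGroup ι ⧸ R) (n : ℤ) :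
    Θ R w (MonoidAlgebra.single c n) = n • η R c w :=
  Finsupp.liftAddHom_apply_single _ _ _

lemma key1 (w : FreeGroup ι) (a : MonoidAlgebra ℤ (FreeGroup ι)) :
    θ R (a * MonoidAlgebra.of ℤ (FreeGroup ι) w) - θ R a
      = Θ R w (MonoidAlgebra.mapDomain (QuotientGroup.mk (s := R)) a) := by
  induction a using MonoidAlgebra.induction_linear with
  | zero => simp
  | add f g hf hg =>
      rw [add_mul, map_add, map_add, MonoidAlgebra.mapDomain_add, map_add, ← hf, ← hg]
      abel
  | single f n =>
      rw [MonoidAlgebra.of_apply, MonoidAlgebra.single_mul_single, mul_one,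
        MonoidAlgebra.mapDomain_single, θ_single, θ_single, Θ_single, φ_mul, smul_add]
      abel

lemma key (a b : MonoidAlgebra ℤ (FreeGroup ι))
    (ha : MonoidAlgebra.mapDomain (QuotientGroup.mk (s := R)) a = 0)
    (hb : MonoidAlgebra.lift ℤ ℤ (FreeGroup ι) 1 b = 0) :
    θ R (a * b) = 0 := by
  have hzero : ∀ w : FreeGroup ι, θ R (a * (MonoidAlgebra.of ℤ (FreeGroup ι) w - 1)) = 0 := by
    intro w
    have h1 := key1 R w a
    rw [ha, map_zero, sub_eq_zero] at h1
    rw [mul_sub, mul_one, map_sub, h1, sub_self]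
  have haug : (b.coeff.sum fun _ n => n) = 0 := by
    simpa [MonoidAlgebra.lift_apply] using hb
  have hb' : (b.coeff.sum fun w n => n • (MonoidAlgebra.of ℤ (FreeGroup ι) w - 1)) = b := by
    simp only [smul_sub]
    rw [Finsupp.sum_sub]
    have h2 : (b.coeff.sum fun w n => n • (MonoidAlgebra.of ℤ (FreeGroup ι) w)) = b := by
      simp [MonoidAlgebra.of_apply, Finsupp.smul_single]
    have h3 : (b.coeff.sum fun w n => n • (1 : MonoidAlgebra ℤ (FreeGroup ι))) = 0 := by
      have h4 := map_finsuppSum (zmultiplesHom (MonoidAlgebra ℤ (FreeGroup ι)) 1) b.coeff (fun _ n => n)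
      simp only [zmultiplesHom_apply] at h4
      rw [← h4, haug, zero_smul]
    rw [h2, h3, sub_zero]
  conv_lhs => rw [← hb']
  rw [Finsupp.mul_sum, map_finsuppSum]
  rw [Finsupp.sum]
  apply Finset.sum_eq_zero
  intro w _
  rw [mul_smul_comm, map_zsmul, hzero, smul_zero]

lemma theta_sub_one (y : FreeGroup ι) (hy : y ∈ R) :
    θ R (MonoidAlgebra.of ℤ (FreeGroup ι) y - 1)
      = Additive.ofMul (Abelianization.of (⟨y, hy⟩ : R)) := by
  have hq : (QuotientGroup.mk y : FreeGroup ι ⧸ R) = 1 := (QuotientGroup.eq_one_iff y).2 hy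
  rw [map_sub, MonoidAlgebra.one_def, MonoidAlgebra.of_apply, θ_single, θ_single,
    one_smul, one_smul]
  unfold φ rp
  simp only [hq, QuotientGroup.mk_one]
  rw [← ofMul_div, ← map_div]
  refine congrArg _ (congrArg _ (Subtype.ext ?_))
  show (y * _⁻¹) / (1 * _⁻¹) = y
  rw [one_mul]
  exact mul_div_cancel_right y _

lemma mem_comm_of (y : FreeGroup ι) (hy : y ∈ R)
    (h : Abelianization.of (⟨y, hy⟩ : R) = 1) : y ∈ ⁅R, R⁆ := by
  have h2 : (⟨y, hy⟩ : R) ∈ _root_.commutator R := (QuotientGroup.eq_one_iff _).1 h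
  rw [commutator_def] at h2
  have h3 := Subgroup.mem_map_of_mem R.subtype h2
  rw [Subgroup.map_commutator] at h3
  rwa [← MonoidHom.range_eq_map, Subgroup.range_subtype] at h3

end Stmt7Aux

set_option maxHeartbeats 1000000 in
/-- Let `R` be a normal subgroup of a free group `F`, `Δ_R` the kernel of the induced
map `ZF → Z(F/R)`, and `Δ` the augmentation ideal (kernel of `ZF → Z`).  For `y ∈ F`,
`y - 1 ∈ Δ_R·Δ` if and only if `y` belongs to the commutator subgroup `R' = [R,R]`. -/
theorem stmt7 {ι : Type*} (R : Subgroup (FreeGroup ι)) [R.Normal]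
    (y : FreeGroup ι) :
    (MonoidAlgebra.of ℤ (FreeGroup ι) y - 1) ∈
        AddSubgroup.closure
          {z : MonoidAlgebra ℤ (FreeGroup ι) |
            ∃ a ∈ RingHom.ker
              (MonoidAlgebra.mapDomainRingHom ℤ (QuotientGroup.mk' R)),
            ∃ b ∈ RingHom.ker
              (MonoidAlgebra.lift ℤ ℤ (FreeGroup ι) 1).toRingHom,
            z = a * b}
      ↔ y ∈ ⁅R, R⁆ := by
  classical
  set S : Set (MonoidAlgebra ℤ (FreeGroup ι)) :=
    {z : MonoidAlgebra ℤ (FreeGroup ι) |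
      ∃ a ∈ RingHom.ker (MonoidAlgebra.mapDomainRingHom ℤ (QuotientGroup.mk' R)),
      ∃ b ∈ RingHom.ker (MonoidAlgebra.lift ℤ ℤ (FreeGroup ι) 1).toRingHom,
      z = a * b} with hS
  have hker_a : ∀ a : MonoidAlgebra ℤ (FreeGroup ι),
      a ∈ RingHom.ker (MonoidAlgebra.mapDomainRingHom ℤ (QuotientGroup.mk' R)) ↔
      MonoidAlgebra.mapDomain (QuotientGroup.mk (s := R)) a = 0 := by
    intro a
    rw [RingHom.mem_ker, MonoidAlgebra.mapDomainRingHom_apply, QuotientGroup.coe_mk']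
  have hker_b : ∀ b : MonoidAlgebra ℤ (FreeGroup ι),
      b ∈ RingHom.ker (MonoidAlgebra.lift ℤ ℤ (FreeGroup ι) 1).toRingHom ↔
      MonoidAlgebra.lift ℤ ℤ (FreeGroup ι) 1 b = 0 := fun b => Iff.rfl
  have hof : ∀ t : FreeGroup ι,
      MonoidAlgebra.mapDomainRingHom ℤ (QuotientGroup.mk' R) (MonoidAlgebra.of ℤ (FreeGroup ι) t)
        = MonoidAlgebra.of ℤ (FreeGroup ι ⧸ R) (QuotientGroup.mk t) :=
    fun t => MonoidAlgebra.mapDomain_single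
  constructor
  · intro h
    -- Step 1: y ∈ R
    have hmap0 : ∀ z ∈ AddSubgroup.closure S,
        MonoidAlgebra.mapDomainRingHom ℤ (QuotientGroup.mk' R) z = 0 := by
      intro z hz
      induction hz using AddSubgroup.closure_induction with
      | mem x hx =>
          obtain ⟨a, ha, b, hb, rfl⟩ := hx
          rw [map_mul, RingHom.mem_ker.mp ha, zero_mul]
      | zero => exact map_zero _
      | add x x' _ _ hx hx' => rw [map_add, hx, hx', add_zero]
      | neg x _ hx => rw [map_neg, hx, neg_zero]
    have h0 := hmap0 _ h
    rw [map_sub, map_one, sub_eq_zero, hof y] at h0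
    have hyR : y ∈ R := by
      have h2 : (QuotientGroup.mk y : FreeGroup ι ⧸ R) = 1 := by
        apply MonoidAlgebra.of_injective (R := ℤ) (M := FreeGroup ι ⧸ R)
        rw [h0, map_one]
      exact (QuotientGroup.eq_one_iff y).1 h2
    -- Step 2: θ vanishes on the closure
    have hθ0 : ∀ z ∈ AddSubgroup.closure S, Stmt7Aux.θ R z = 0 := by
      intro z hz
      induction hz using AddSubgroup.closure_induction with
      | mem x hx =>
          obtain ⟨a, ha, b, hb, rfl⟩ := hx
          exact Stmt7Aux.key R a b ((hker_a a).1 ha) ((hker_b b).1 hb)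
      | zero => exact map_zero _
      | add x x' _ _ hx hx' => rw [map_add, hx, hx', add_zero]
      | neg x _ hx => rw [map_neg, hx, neg_zero]
    have h3 := hθ0 _ h
    rw [Stmt7Aux.theta_sub_one R y hyR] at h3
    exact Stmt7Aux.mem_comm_of R y hyR (by
      have h4 : Additive.toMul (Additive.ofMul (Abelianization.of (⟨y, hyR⟩ : R))) = 1 := by
        rw [h3]; rfl
      simpa using h4)
  · intro hy
    have hIr : ∀ z ∈ AddSubgroup.closure S,
        ∀ c, z * c ∈ AddSubgroup.closure S := by
      intro z hz
      induction hz using AddSubgroup.closure_induction with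
      | mem x hx =>
          intro c
          obtain ⟨a, ha, b, hb, rfl⟩ := hx
          refine AddSubgroup.subset_closure ⟨a, ha, b * c, ?_, by rw [mul_assoc]⟩
          rw [RingHom.mem_ker, map_mul, RingHom.mem_ker.mp hb, zero_mul]
      | zero => intro c; rw [zero_mul]; exact zero_mem _
      | add x x' _ _ hx hx' => intro c; rw [add_mul]; exact add_mem (hx c) (hx' c)
      | neg x _ hx => intro c; rw [neg_mul]; exact neg_mem (hx c)
    let T : Subgroup (FreeGroup ι) :=
      { carrier := {x | MonoidAlgebra.of ℤ (FreeGroup ι) x - 1 ∈ AddSubgroup.closure S}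
        one_mem' := by
          show MonoidAlgebra.of ℤ (FreeGroup ι) 1 - 1 ∈ AddSubgroup.closure S
          rw [map_one, sub_self]; exact zero_mem _
        mul_mem' := by
          intro p q hp hq
          show MonoidAlgebra.of ℤ (FreeGroup ι) (p * q) - 1 ∈ AddSubgroup.closure S
          have heq : MonoidAlgebra.of ℤ (FreeGroup ι) (p * q) - 1 =
              (MonoidAlgebra.of ℤ (FreeGroup ι) p - 1) * MonoidAlgebra.of ℤ (FreeGroup ι) q +
              (MonoidAlgebra.of ℤ (FreeGroup ι) q - 1) := by
            rw [map_mul]; noncomm_ring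
          rw [heq]
          exact add_mem (hIr _ hp _) hq
        inv_mem' := by
          intro p hp
          show MonoidAlgebra.of ℤ (FreeGroup ι) p⁻¹ - 1 ∈ AddSubgroup.closure S
          have heq : MonoidAlgebra.of ℤ (FreeGroup ι) p⁻¹ - 1 =
              -((MonoidAlgebra.of ℤ (FreeGroup ι) p - 1) *
                MonoidAlgebra.of ℤ (FreeGroup ι) p⁻¹) := by
            have h5 : MonoidAlgebra.of ℤ (FreeGroup ι) p * MonoidAlgebra.of ℤ (FreeGroup ι) p⁻¹
                = 1 := by rw [← map_mul, mul_inv_cancel, map_one]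
            rw [sub_mul, h5]; noncomm_ring
          rw [heq]
          exact neg_mem (hIr _ hp _) }
    have hsub : ⁅R, R⁆ ≤ T := by
      rw [Subgroup.commutator_def]
      refine (Subgroup.closure_le T).2 ?_
      rintro x ⟨r, hr, s, hs, rfl⟩
      show MonoidAlgebra.of ℤ (FreeGroup ι) ⁅r, s⁆ - 1 ∈ AddSubgroup.closure S
      have hka : ∀ t : FreeGroup ι, t ∈ R → (MonoidAlgebra.of ℤ (FreeGroup ι) t - 1) ∈
          RingHom.ker (MonoidAlgebra.mapDomainRingHom ℤ (QuotientGroup.mk' R)) := by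
        intro t ht
        rw [RingHom.mem_ker, map_sub, map_one, hof t, (QuotientGroup.eq_one_iff t).2 ht,
          map_one, sub_self]
      have hkb : ∀ t : FreeGroup ι, (MonoidAlgebra.of ℤ (FreeGroup ι) t - 1) ∈
          RingHom.ker (MonoidAlgebra.lift ℤ ℤ (FreeGroup ι) 1).toRingHom := by
        intro t
        rw [hker_b, map_sub, MonoidAlgebra.lift_of,
          map_one (MonoidAlgebra.lift ℤ ℤ (FreeGroup ι) 1)]
        simp
      have m1 : (MonoidAlgebra.of ℤ (FreeGroup ι) r - 1) *
          (MonoidAlgebra.of ℤ (FreeGroup ι) s - 1) ∈ S :=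
        ⟨_, hka r hr, _, hkb s, rfl⟩
      have m2 : (MonoidAlgebra.of ℤ (FreeGroup ι) s - 1) *
          (MonoidAlgebra.of ℤ (FreeGroup ι) r - 1) ∈ S :=
        ⟨_, hka s hs, _, hkb r, rfl⟩
      have hd : MonoidAlgebra.of ℤ (FreeGroup ι) (r * s) -
          MonoidAlgebra.of ℤ (FreeGroup ι) (s * r) =
          (MonoidAlgebra.of ℤ (FreeGroup ι) r - 1) * (MonoidAlgebra.of ℤ (FreeGroup ι) s - 1) -
          (MonoidAlgebra.of ℤ (FreeGroup ι) s - 1) * (MonoidAlgebra.of ℤ (FreeGroup ι) r - 1) := by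
        rw [map_mul, map_mul]; noncomm_ring
      have hz : MonoidAlgebra.of ℤ (FreeGroup ι) (r * s) -
          MonoidAlgebra.of ℤ (FreeGroup ι) (s * r) ∈ AddSubgroup.closure S := by
        rw [hd]
        exact sub_mem (AddSubgroup.subset_closure m1) (AddSubgroup.subset_closure m2)
      have hfinal : MonoidAlgebra.of ℤ (FreeGroup ι) ⁅r, s⁆ - 1 =
          (MonoidAlgebra.of ℤ (FreeGroup ι) (r * s) - MonoidAlgebra.of ℤ (FreeGroup ι) (s * r)) *
          MonoidAlgebra.of ℤ (FreeGroup ι) (s * r)⁻¹ := by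
        rw [sub_mul, ← map_mul, ← map_mul, mul_inv_cancel, map_one]
        congr 2
        show ⁅r, s⁆ = r * s * (s * r)⁻¹
        rw [commutatorElement_def, mul_inv_rev, mul_assoc]
      rw [hfinal]
      exact hIr _ hz _
    exact hsub hy
end

section
/- Let J be a right ideal of the integral group ring ZF of a free group F that is free as a right ZF-module with basis u_1,…,u_m. For an m × m matrix M = (a_{ij}) over ZF, the following are equivalent: (a) M is invertible over ZF; (b) the elements y_j = Σ_{k=1}^m u_k · a_{kj} (1 ≤ j ≤ m) generate J as a right ideal of ZF. -/
open scoped Pointwise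

namespace Stmt9Aux

universe u

variable {ι : Type u}

lemma exists_perm_sep (w : FreeGroup ι) (hw : w ≠ 1) :
    ∃ (n : ℕ) (φ : FreeGroup ι →* Equiv.Perm (Fin (n + 1))), φ w ≠ 1 := by
  classical
  set L : List (ι × Bool) := w.toWord with hL
  set n := L.length with hn
  have hn0 : 0 < n := by
    rw [hn, List.length_pos_iff]
    simpa [hL, FreeGroup.toWord_eq_nil_iff] using hw
  have hredL : FreeGroup.reduce L = L := by rw [hL]; exact FreeGroup.reduce_toWord w
  -- no adjacent cancelling pair
  have noCancel : ∀ k k' : Fin n, (k' : ℕ) = (k : ℕ) + 1 →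
      (L.get k).1 = (L.get k').1 → (L.get k').2 = !(L.get k).2 → False := by
    intro k k' hkk h1 h2
    have hk1 : (k : ℕ) + 1 < L.length := by have := k'.isLt; omega
    have e1 : L.drop (k : ℕ) = L[(k : ℕ)]'(k.isLt) :: L.drop ((k : ℕ) + 1) :=
      List.drop_eq_getElem_cons k.isLt
    have e2 : L.drop ((k : ℕ) + 1) = L[(k : ℕ) + 1]'hk1 :: L.drop ((k : ℕ) + 2) :=
      List.drop_eq_getElem_cons hk1
    have e3 : L[(k : ℕ) + 1]'hk1 = ((L.get k).1, !(L.get k).2) := by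
      have hgk : L.get k' = L[(k : ℕ) + 1]'hk1 := by
        simp [List.get_eq_getElem, hkk]
      rw [← hgk]
      exact Prod.ext h1.symm h2
    have e0 : L[(k : ℕ)]'(k.isLt) = ((L.get k).1, (L.get k).2) := by
      simp [List.get_eq_getElem]
    have hsplit : L = L.take (k : ℕ) ++
        ((L.get k).1, (L.get k).2) :: ((L.get k).1, !(L.get k).2) :: L.drop ((k : ℕ) + 2) := by
      conv_lhs => rw [← List.take_append_drop (k : ℕ) L]
      rw [e1, e2, e3, e0]
    exact FreeGroup.reduce.not (by rw [hredL]; exact hsplit)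
  -- source and target of the partial injection attached to a generator
  have hlt : ∀ k : Fin n, (n : ℕ) - 1 - (k : ℕ) < n + 1 := fun k => by omega
  have hlt' : ∀ k : Fin n, (n : ℕ) - (k : ℕ) < n + 1 := fun k => by omega
  set src : Fin n → Fin (n + 1) :=
    fun k => if (L.get k).2 then ⟨n - 1 - (k : ℕ), hlt k⟩ else ⟨n - (k : ℕ), hlt' k⟩ with hsrc
  set tgt : Fin n → Fin (n + 1) :=
    fun k => if (L.get k).2 then ⟨n - (k : ℕ), hlt' k⟩ else ⟨n - 1 - (k : ℕ), hlt k⟩ with htgt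
  set Ki : ι → Set (Fin n) := fun i => {k | (L.get k).1 = i} with hKi
  have hsrcInj : ∀ i, Set.InjOn src (Ki i) := by
    intro i k hk k' hk' hs
    have hkn := k.isLt; have hk'n := k'.isLt
    rcases hbk : (L.get k).2 <;> rcases hbk' : (L.get k').2 <;>
      simp only [List.get_eq_getElem] at hbk hbk' <;>
      simp [hsrc, hbk, hbk', Fin.mk.injEq] at hs
    · exact Fin.ext (by omega)
    · -- k false, k' true : n - k = n - 1 - k' → k = k' + 1
      have hkk : (k : ℕ) = (k' : ℕ) + 1 := by omega
      exact (noCancel k' k hkk (hk'.trans hk.symm) (by simp [List.get_eq_getElem, hbk, hbk'])).elim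
    · -- k true, k' false : n - 1 - k = n - k' → k' = k + 1
      have hkk : (k' : ℕ) = (k : ℕ) + 1 := by omega
      exact (noCancel k k' hkk (hk.trans hk'.symm) (by simp [List.get_eq_getElem, hbk, hbk'])).elim
    · exact Fin.ext (by omega)
  have htgtInj : ∀ i, Set.InjOn tgt (Ki i) := by
    intro i k hk k' hk' hs
    have hkn := k.isLt; have hk'n := k'.isLt
    rcases hbk : (L.get k).2 <;> rcases hbk' : (L.get k').2 <;>
      simp only [List.get_eq_getElem] at hbk hbk' <;>
      simp [htgt, hbk, hbk', Fin.mk.injEq] at hs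
    · exact Fin.ext (by omega)
    · -- k false (tgt = n-1-k), k' true (tgt = n-k') : n-1-k = n-k' → k' = k+1
      have hkk : (k' : ℕ) = (k : ℕ) + 1 := by omega
      exact (noCancel k k' hkk (hk.trans hk'.symm) (by simp [List.get_eq_getElem, hbk, hbk'])).elim
    · have hkk : (k : ℕ) = (k' : ℕ) + 1 := by omega
      exact (noCancel k' k hkk (hk'.trans hk.symm) (by simp [List.get_eq_getElem, hbk, hbk'])).elim
    · exact Fin.ext (by omega)
  set e : ∀ i : ι, ↥(src '' Ki i) ≃ ↥(tgt '' Ki i) := fun i =>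
    (Equiv.Set.imageOfInjOn src (Ki i) (hsrcInj i)).symm.trans
      (Equiv.Set.imageOfInjOn tgt (Ki i) (htgtInj i)) with he
  set σ : ι → Equiv.Perm (Fin (n + 1)) := fun i => Equiv.extendSubtype (e i) with hσdef
  have hσ : ∀ (i : ι) (k : Fin n), k ∈ Ki i → σ i (src k) = tgt k := by
    intro i k hk
    have hmem : src k ∈ src '' Ki i := ⟨k, hk, rfl⟩
    rw [hσdef]
    simp only
    rw [Equiv.extendSubtype_apply_of_mem (e i) _ hmem]
    set x := (Equiv.Set.imageOfInjOn src (Ki i) (hsrcInj i)).symm ⟨src k, hmem⟩ with hx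
    have h1 : Equiv.Set.imageOfInjOn src (Ki i) (hsrcInj i) x = ⟨src k, hmem⟩ :=
      Equiv.apply_symm_apply _ _
    have h2 : src (x : Fin n) = src k := congrArg Subtype.val h1
    have h3 : (x : Fin n) = k := hsrcInj i x.2 hk h2
    show (Equiv.Set.imageOfInjOn tgt (Ki i) (htgtInj i) x : Fin (n + 1)) = tgt k
    rw [show (Equiv.Set.imageOfInjOn tgt (Ki i) (htgtInj i) x : Fin (n + 1)) = tgt (x : Fin n)
      from rfl, h3]
  refine ⟨n, FreeGroup.lift σ, ?_⟩
  have hw' : FreeGroup.lift σ w =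
      List.prod (L.map fun x => cond x.2 (σ x.1) (σ x.1)⁻¹) := by
    conv_lhs => rw [← FreeGroup.mk_toWord (x := w)]
    exact FreeGroup.lift_mk
  have key : ∀ j : ℕ, (hj : j ≤ n) →
      (List.prod (List.map (fun x => cond x.2 (σ x.1) (σ x.1)⁻¹) (L.drop (n - j))))
        ⟨0, Nat.succ_pos n⟩ = ⟨j, Nat.lt_succ_of_le hj⟩ := by
    intro j
    induction j with
    | zero =>
      intro _
      rw [Nat.sub_zero, List.drop_eq_nil_of_le (le_of_eq hn.symm)]
      simp
    | succ j ih =>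
      intro hj
      have hk : n - (j + 1) < n := by omega
      set k' : Fin n := ⟨n - (j + 1), hk⟩ with hk'
      have hdrop : L.drop (n - (j + 1)) = L.get k' :: L.drop (n - (j + 1) + 1) := by
        rw [List.drop_eq_getElem_cons (h := hk)]
        rfl
      have hstep : n - (j + 1) + 1 = n - j := by omega
      rw [hdrop, List.map_cons, List.prod_cons, Equiv.Perm.mul_apply, hstep, ih (by omega)]
      have hki : k' ∈ Ki (L.get k').1 := rfl
      have hs := hσ (L.get k').1 k' hki
      rcases hbe : (L.get k').2
      · -- false : apply (σ i)⁻¹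
        simp only [hbe, cond_false]
        have hsv : src k' = ⟨j + 1, Nat.lt_succ_of_le hj⟩ := by
          rw [hsrc]; simp only [hbe, if_false]; exact Fin.ext (by simp [hk']; omega)
        have htv : tgt k' = ⟨j, Nat.lt_succ_of_le (by omega)⟩ := by
          rw [htgt]; simp only [hbe, if_false]; exact Fin.ext (by simp [hk']; omega)
        rw [hsv, htv] at hs
        rw [← hs]
        simp
      · -- true : apply σ i
        simp only [hbe, cond_true]
        have hsv : src k' = ⟨j, Nat.lt_succ_of_le (by omega)⟩ := by
          rw [hsrc]; simp only [hbe, if_true]; exact Fin.ext (by simp [hk']; omega)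
        have htv : tgt k' = ⟨j + 1, Nat.lt_succ_of_le hj⟩ := by
          rw [htgt]; simp only [hbe, if_true]; exact Fin.ext (by simp [hk']; omega)
        rw [hsv, htv] at hs
        exact hs
  intro hone
  have := key n le_rfl
  rw [Nat.sub_self, List.drop_zero, ← hw', hone] at this
  have : (0 : ℕ) = n := by simp at this; omega
  omega

lemma exists_finite_sep (T : Finset (FreeGroup ι)) :
    ∃ (G : Type u) (_ : Group G) (_ : Fintype G) (φ : FreeGroup ι →* G),
      Set.InjOn φ ↑T := by
  classical
  have hpair : ∀ p : FreeGroup ι × FreeGroup ι,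
      ∃ (n : ℕ) (ψ : FreeGroup ι →* Equiv.Perm (Fin (n + 1))),
        p.1⁻¹ * p.2 ≠ 1 → ψ (p.1⁻¹ * p.2) ≠ 1 := by
    intro p
    by_cases h : p.1⁻¹ * p.2 = 1
    · exact ⟨0, 1, fun h' => absurd h h'⟩
    · obtain ⟨n, ψ, hψ⟩ := exists_perm_sep _ h
      exact ⟨n, ψ, fun _ => hψ⟩
  choose nn ψψ hψψ using hpair
  refine ⟨∀ p : ↥(T ×ˢ T), Equiv.Perm (Fin (nn (p : FreeGroup ι × FreeGroup ι) + 1)),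
    inferInstance, inferInstance,
    Pi.monoidHom (fun p => ψψ (p : FreeGroup ι × FreeGroup ι)), ?_⟩
  intro g hg h hh heq
  by_contra hne
  have hp : (g, h) ∈ T ×ˢ T := Finset.mem_product.mpr ⟨hg, hh⟩
  have h1 : g⁻¹ * h ≠ 1 := by
    intro hgh
    exact hne (by rw [← inv_mul_eq_one]; exact hgh)
  apply hψψ (g, h) h1
  have hcomp : ψψ (g, h) g = ψψ (g, h) h := congrFun heq ⟨(g, h), hp⟩
  rw [map_mul, map_inv, hcomp]
  simp

lemma mul_one_comm {A : Type*} [Ring A] (hfg : AddGroup.FG A) {a b : A} (h : a * b = 1) :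
    b * a = 1 := by
  haveI : Module.Finite ℤ A := Module.Finite.iff_addGroup_fg.mpr hfg
  haveI : IsNoetherian ℤ A := isNoetherian_of_isNoetherianRing_of_finite ℤ A
  have hs : Function.Surjective (LinearMap.mulLeft ℤ a) := fun x =>
    ⟨b * x, by rw [LinearMap.mulLeft_apply, ← mul_assoc, h, one_mul]⟩
  have hi := IsNoetherian.injective_of_surjective_endomorphism _ hs
  have hh : (LinearMap.mulLeft ℤ a) (b * a) = (LinearMap.mulLeft ℤ a) 1 := by
    rw [LinearMap.mulLeft_apply, LinearMap.mulLeft_apply, ← mul_assoc, h, one_mul, mul_one]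
  exact hi hh

lemma addGroup_fg_matrix (m : ℕ) (G : Type*) [Fintype G] :
    AddGroup.FG (Matrix (Fin m) (Fin m) (MonoidAlgebra ℤ G)) := by
  classical
  have hsrc : Module.Finite ℤ (Fin m → Fin m → G → ℤ) := inferInstance
  have hfg : AddGroup.FG (Fin m → Fin m → G → ℤ) := Module.Finite.iff_addGroup_fg.mp hsrc
  let f : (Fin m → Fin m → (G → ℤ)) →+ Matrix (Fin m) (Fin m) (MonoidAlgebra ℤ G) :=
    { toFun := fun F => Matrix.of fun i j => MonoidAlgebra.ofCoeff (Finsupp.equivFunOnFinite.symm (F i j))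
      map_zero' := by
        ext i j g
        rfl
      map_add' := by
        intro x y
        ext i j g
        rfl }
  have hf : Function.Surjective f := by
    intro M
    refine ⟨fun i j => ((M i j).coeff : G → ℤ), ?_⟩
    apply Matrix.ext
    intro i j
    exact congrArg MonoidAlgebra.ofCoeff (Finsupp.equivFunOnFinite_symm_coe (M i j).coeff)
  exact AddGroup.fg_of_surjective (f := f) hf

lemma matrix_dedekind (m : ℕ)
    (M N : Matrix (Fin m) (Fin m) (MonoidAlgebra ℤ (FreeGroup ι)))
    (h : M * N = 1) : N * M = 1 := by
  classical
  set A : Finset (FreeGroup ι) :=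
    (Finset.univ : Finset (Fin m × Fin m)).biUnion (fun p => (N p.1 p.2).coeff.support) with hA
  set B : Finset (FreeGroup ι) :=
    (Finset.univ : Finset (Fin m × Fin m)).biUnion (fun p => (M p.1 p.2).coeff.support) with hB
  set T : Finset (FreeGroup ι) := insert 1 (A * B) with hT
  obtain ⟨G, _, _, φ, hφ⟩ := exists_finite_sep T
  set ψ := MonoidAlgebra.mapDomainRingHom ℤ φ with hψ
  have h1 : ψ.mapMatrix M * ψ.mapMatrix N = 1 := by
    rw [← map_mul, h, map_one]
  have h2 : ψ.mapMatrix N * ψ.mapMatrix M = 1 :=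
    mul_one_comm (addGroup_fg_matrix m G) h1
  have h3 : ψ.mapMatrix (N * M) = ψ.mapMatrix 1 := by
    rw [map_mul, h2, map_one]
  apply Matrix.ext
  intro i j
  have hsup : (((N * M) i j).coeff.support : Set (FreeGroup ι)) ⊆ ↑T := by
    intro g hg
    rw [Matrix.mul_apply, MonoidAlgebra.coeff_sum] at hg
    obtain ⟨k, -, hk⟩ := Finsupp.mem_support_finset_sum g hg
    have hmul := MonoidAlgebra.support_coeff_mul_subset (N i k) (M k j) hk
    rw [Finset.mem_mul] at hmul
    obtain ⟨a, ha, c, hc, hac⟩ := hmul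
    have haA : a ∈ A := Finset.mem_biUnion.mpr ⟨(i, k), Finset.mem_univ _, ha⟩
    have hcB : c ∈ B := Finset.mem_biUnion.mpr ⟨(k, j), Finset.mem_univ _, hc⟩
    rw [← hac]
    exact Finset.mem_coe.mpr (Finset.mem_insert_of_mem (Finset.mul_mem_mul haA hcB))
  have hsup1 : (((1 : Matrix (Fin m) (Fin m) (MonoidAlgebra ℤ (FreeGroup ι))) i j).coeff.support
      : Set (FreeGroup ι)) ⊆ ↑T := by
    intro g hg
    rw [Matrix.one_apply] at hg
    split_ifs at hg
    · rw [MonoidAlgebra.one_def] at hg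
      have hg1 := Finsupp.support_single_subset hg
      rw [Finset.mem_singleton] at hg1
      subst hg1
      exact Finset.mem_coe.mpr (Finset.mem_insert_self _ _)
    · simp at hg
  have h4 : Finsupp.mapDomain φ ((N * M) i j).coeff =
      Finsupp.mapDomain φ ((1 : Matrix (Fin m) (Fin m) (MonoidAlgebra ℤ (FreeGroup ι))) i j).coeff := by
    have h5 := congrArg (fun X => X i j) h3
    simpa [RingHom.mapMatrix_apply, Matrix.map_apply, hψ,
      MonoidAlgebra.mapDomainRingHom_apply, MonoidAlgebra.mapDomain, MonoidAlgebra.ofCoeff_inj] using h5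
  exact MonoidAlgebra.coeff_injective (Finsupp.mapDomain_injOn ((T : Set (FreeGroup ι))) hφ hsup hsup1 h4)

lemma sum_mul_expand {S : Type*} [Ring S] {m : ℕ} (u : Fin m → S)
    (M N : Matrix (Fin m) (Fin m) S) (i : Fin m) :
    ∑ j, (∑ k, u k * M k j) * N j i = ∑ k, u k * (M * N) k i := by
  simp_rw [Finset.sum_mul, mul_assoc]
  rw [Finset.sum_comm]
  simp_rw [← Finset.mul_sum, Matrix.mul_apply]

lemma sum_mul_one {S : Type*} [Ring S] {m : ℕ} (u : Fin m → S) (i : Fin m) :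
    ∑ k, u k * (1 : Matrix (Fin m) (Fin m) S) k i = u i := by
  simp [Matrix.one_apply]

end Stmt9Aux

/-- Let `J` be a right ideal of the group ring `ZF` of a free group `F` which is free
as a right `ZF`-module with basis `u_1, …, u_m`.  For an `m × m` matrix `M = (a_{ij})`
over `ZF`, `M` is invertible over `ZF` if and only if the elements
`y_j = Σ_k u_k · a_{kj}` generate `J` as a right ideal. -/
theorem stmt9 {ι : Type*} (m : ℕ)
    (J : Submodule (MonoidAlgebra ℤ (FreeGroup ι))ᵐᵒᵖ (MonoidAlgebra ℤ (FreeGroup ι)))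
    (u : Fin m → MonoidAlgebra ℤ (FreeGroup ι))
    (b : Module.Basis (Fin m) (MonoidAlgebra ℤ (FreeGroup ι))ᵐᵒᵖ J)
    (hb : ∀ k, (b k : MonoidAlgebra ℤ (FreeGroup ι)) = u k)
    (M : Matrix (Fin m) (Fin m) (MonoidAlgebra ℤ (FreeGroup ι))) :
    (∃ N : Matrix (Fin m) (Fin m) (MonoidAlgebra ℤ (FreeGroup ι)),
        M * N = 1 ∧ N * M = 1) ↔
      Submodule.span (MonoidAlgebra ℤ (FreeGroup ι))ᵐᵒᵖ
        (Set.range fun j => ∑ k : Fin m, u k * M k j) = J := by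
  classical
  set Y : Fin m → MonoidAlgebra ℤ (FreeGroup ι) := fun j => ∑ k : Fin m, u k * M k j with hY
  have huJ : ∀ k, u k ∈ J := fun k => by rw [← hb k]; exact (b k).2
  constructor
  · rintro ⟨N, hMN, _⟩
    apply le_antisymm
    · rw [Submodule.span_le]
      rintro x ⟨j, rfl⟩
      refine Submodule.sum_mem J fun k _ => ?_
      rw [show u k * M k j = (MulOpposite.op (M k j)) • u k from rfl]
      exact Submodule.smul_mem J _ (huJ k)
    · have hu_mem : ∀ i, u i ∈ Submodule.span (MonoidAlgebra ℤ (FreeGroup ι))ᵐᵒᵖ (Set.range Y) := by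
        intro i
        have hrepr : ∑ j, MulOpposite.op (N j i) • Y j = u i := by
          simp only [op_smul_eq_mul, hY]
          rw [Stmt9Aux.sum_mul_expand u M N i, hMN, Stmt9Aux.sum_mul_one]
        rw [← hrepr]
        exact Submodule.sum_mem _ fun j _ =>
          Submodule.smul_mem _ _ (Submodule.subset_span ⟨j, rfl⟩)
      intro x hx
      have hx' : ∑ k, b.repr ⟨x, hx⟩ k • b k = (⟨x, hx⟩ : J) := b.sum_repr ⟨x, hx⟩
      have hx'' : x = ∑ k, b.repr ⟨x, hx⟩ k • u k := by
        have h0 := congrArg (J.subtype) hx'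
        simp only [map_sum, map_smul, Submodule.coe_subtype, hb] at h0
        exact h0.symm
      rw [hx'']
      exact Submodule.sum_mem _ fun k _ => Submodule.smul_mem _ _ (hu_mem k)
  · intro hspan
    have hmem : ∀ i, u i ∈ Submodule.span (MonoidAlgebra ℤ (FreeGroup ι))ᵐᵒᵖ (Set.range Y) := fun i => by
      rw [hspan]; exact huJ i
    have hex : ∀ i, ∃ c : Fin m → (MonoidAlgebra ℤ (FreeGroup ι))ᵐᵒᵖ, ∑ j, c j • Y j = u i := fun i =>
      (Submodule.mem_span_range_iff_exists_fun _).mp (hmem i)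
    choose c hc using hex
    set N : Matrix (Fin m) (Fin m) (MonoidAlgebra ℤ (FreeGroup ι)) := Matrix.of (fun j i => (c i j).unop) with hN
    have hval : ∀ i, ∑ k, u k * (M * N) k i = u i := by
      intro i
      have h0 : ∑ j, Y j * N j i = u i := by
        rw [← hc i]
        exact Finset.sum_congr rfl fun j _ => rfl
      simp only [hY] at h0
      exact (Stmt9Aux.sum_mul_expand u M N i).symm.trans h0
    have hz : ∀ i, (∑ k, MulOpposite.op ((M * N) k i) • b k : J) = b i := by
      intro i
      apply J.injective_subtype
      rw [map_sum]
      simp only [map_smul, Submodule.coe_subtype, hb, op_smul_eq_mul]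
      exact hval i
    have hMN : M * N = 1 := by
      apply Matrix.ext
      intro l i
      have h1 := congrArg b.repr (hz i)
      rw [map_sum] at h1
      simp only [map_smul, Module.Basis.repr_self] at h1
      have h2 := DFunLike.congr_fun h1 l
      simp only [Finsupp.finset_sum_apply, Finsupp.smul_apply, Finsupp.single_apply,
        smul_eq_mul, mul_ite, mul_one, mul_zero, Finset.sum_ite_eq', Finset.mem_univ,
        if_true] at h2
      have h3 : (M * N) l i = if i = l then 1 else 0 := by
        have h4 := congrArg MulOpposite.unop h2
        simpa [apply_ite MulOpposite.unop] using h4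
      rw [h3, Matrix.one_apply]
      by_cases hli : l = i
      · simp [hli]
      · simp [hli, Ne.symm hli]
    exact ⟨N, hMN, Stmt9Aux.matrix_dedekind m M N hMN⟩
end

section
/- Let F be the free group of rank 2 with basis x₁, x₂. Every element h of the commutator subgroup of the free metabelian group M₂ = F/F'' can be written as [x₁, x₂]^w for some element w of the group ring Z(M₂/M₂') acting by conjugation-induced module structure; consequently, M₂'/M₂'' (which equals M₂' since M₂ is metabelian) is a cyclic module over Z(M₂/M₂') generated by [x₁, x₂]. -/
/-- The free metabelian group of rank 2: `M₂ = F/F''` where `F` is free of rank 2. -/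
abbrev FM2 : Type :=
  FreeGroup (Fin 2) ⧸ ⁅commutator (FreeGroup (Fin 2)), commutator (FreeGroup (Fin 2))⁆

/-- The images of the free generators in `M₂`. -/
abbrev fm2Gen (i : Fin 2) : FM2 := QuotientGroup.mk (FreeGroup.of i)

open scoped commutatorElement

/-- Every element `h` of the commutator subgroup of the free metabelian group `M₂` of
rank 2 can be written as `[x₁,x₂]^w` for some `w` in the group ring `Z(M₂/M₂')` acting
by the conjugation-induced module structure; equivalently (since such elements are
exactly products of conjugates of `[x₁,x₂]^{±1}`), the commutator subgroup of `M₂` is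
the normal closure of `[x₁,x₂]`, i.e. `M₂'` is a cyclic `Z(M₂/M₂')`-module generated
by `[x₁,x₂]`. -/
theorem stmt11 :
    commutator FM2 = Subgroup.normalClosure {⁅fm2Gen 0, fm2Gen 1⁆} := by
  set N := Subgroup.normalClosure ({⁅fm2Gen 0, fm2Gen 1⁆} : Set FM2) with hNdef
  have hNnorm : N.Normal := Subgroup.normalClosure_normal
  apply le_antisymm
  · -- Quotient by N is abelian
    set π : FM2 →* FM2 ⧸ N := QuotientGroup.mk' N with hπ
    set a := π (fm2Gen 0) with ha
    set b := π (fm2Gen 1) with hb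
    have hab : Commute a b := by
      rw [← commutatorElement_eq_one_iff_commute, ← map_commutatorElement]
      exact (QuotientGroup.eq_one_iff _).2 (Subgroup.subset_normalClosure rfl)
    -- the quotient is generated by a and b
    have hgen : Subgroup.closure ({a, b} : Set (FM2 ⧸ N)) = ⊤ := by
      have f : FreeGroup (Fin 2) →* FM2 ⧸ N :=
        π.comp (QuotientGroup.mk' _)
      have hfsurj : Function.Surjective
          (π.comp (QuotientGroup.mk' ⁅commutator (FreeGroup (Fin 2)), commutator (FreeGroup (Fin 2))⁆)) :=
        (QuotientGroup.mk'_surjective N).comp (QuotientGroup.mk'_surjective _)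
      have h1 : Subgroup.closure (Set.range FreeGroup.of) = (⊤ : Subgroup (FreeGroup (Fin 2))) :=
        FreeGroup.closure_range_of (Fin 2)
      have h2 := MonoidHom.map_closure
        (π.comp (QuotientGroup.mk' ⁅commutator (FreeGroup (Fin 2)), commutator (FreeGroup (Fin 2))⁆))
        (Set.range FreeGroup.of)
      rw [h1] at h2
      have h3 : Subgroup.map
          (π.comp (QuotientGroup.mk' ⁅commutator (FreeGroup (Fin 2)), commutator (FreeGroup (Fin 2))⁆)) ⊤ = ⊤ := by
        rw [← MonoidHom.range_eq_map, MonoidHom.range_eq_top]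
        exact hfsurj
      have h4 : (π.comp (QuotientGroup.mk' ⁅commutator (FreeGroup (Fin 2)), commutator (FreeGroup (Fin 2))⁆)) ''
          Set.range FreeGroup.of = {a, b} := by
        rw [← Set.range_comp]
        ext x
        simp only [Set.mem_range, Set.mem_insert_iff, Set.mem_singleton_iff, Function.comp]
        constructor
        · rintro ⟨i, rfl⟩
          fin_cases i
          · left; rfl
          · right; rfl
        · rintro (rfl | rfl)
          · exact ⟨0, rfl⟩
          · exact ⟨1, rfl⟩
      rw [← h4, ← h2, h3]
    -- hence the quotient is abelian: everything is central
    have hScent : ({a, b} : Set (FM2 ⧸ N)) ⊆ Subgroup.centralizer {a, b} := by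
      rintro x (rfl | rfl) <;> rintro y (rfl | rfl)
      · rfl
      · exact hab.symm.eq
      · exact hab.eq
      · rfl
    have hcent : ∀ x : FM2 ⧸ N, x ∈ Subgroup.centralizer ({a, b} : Set (FM2 ⧸ N)) := by
      intro x
      have := (Subgroup.closure_le _).2 hScent
      rw [hgen] at this
      exact this (Subgroup.mem_top x)
    have hcenter : ∀ x : FM2 ⧸ N, x ∈ Subgroup.center (FM2 ⧸ N) := by
      have hS : ({a, b} : Set (FM2 ⧸ N)) ⊆ Subgroup.center (FM2 ⧸ N) := by
        rintro s hs
        rw [SetLike.mem_coe, Subgroup.mem_center_iff]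
        intro g
        exact (hcent g s hs).symm
      intro x
      have := (Subgroup.closure_le _).2 hS
      rw [hgen] at this
      exact this (Subgroup.mem_top x)
    refine Subgroup.commutator_le.2 ?_
    intro g _ h _
    refine (QuotientGroup.eq_one_iff ⁅g, h⁆).1 ?_
    show π ⁅g, h⁆ = 1
    rw [map_commutatorElement]
    exact commutatorElement_eq_one_iff_commute.2
      (Subgroup.mem_center_iff.1 (hcenter (π h)) (π g))
  · refine Subgroup.normalClosure_le_normal ?_
    rintro x rfl
    exact Subgroup.commutator_mem_commutator (Subgroup.mem_top _) (Subgroup.mem_top _)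
end

section
/- Let A₂ = Z² be free abelian of rank 2 and R = Z[A₂] its integral group ring (Laurent polynomials in two variables). If w ∈ R and the ideal of R generated by w·p₁ and w·p₂ equals the ideal generated by p₁ and p₂, where (p₁, p₂) = (x₂ - 1, -(x₁ - 1)) (the abelianized Fox derivatives of [x₁,x₂]), then w is a unit of R, i.e., w = ± g for some g ∈ A₂. -/
open AddMonoidAlgebra

/-- Coefficient of a product at the sum of top degrees. -/
lemma mul_apply_top {B : Type*} [AddCommGroup B] [LinearOrder B] [IsOrderedAddMonoid B] (D : ℤ × ℤ → B)
    (hadd : ∀ a b, D (a + b) = D a + D b) (hD : Function.Injective D)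
    (p q : AddMonoidAlgebra ℤ (ℤ × ℤ)) (ap aq : ℤ × ℤ)
    (hp : ∀ a ∈ p.coeff.support, D a ≤ D ap) (hq : ∀ b ∈ q.coeff.support, D b ≤ D aq) :
    (p * q).coeff (ap + aq) = p.coeff ap * q.coeff aq := by
  classical
  simp_rw [AddMonoidAlgebra.coeff_mul, Finsupp.sum]
  rw [Finset.sum_eq_single ap, Finset.sum_eq_single aq, if_pos rfl]
  · refine fun a ha hne => if_neg fun he => ?_
    apply_fun D at he; simp_rw [hadd] at he
    exact (add_lt_add_right (((hq a ha)).lt_of_ne <| hD.ne_iff.2 hne) _).ne he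
  · intro h; rw [if_pos rfl, Finsupp.notMem_support_iff.1 h, mul_zero]
  · refine fun a ha hne => Finset.sum_eq_zero fun a' ha' => if_neg fun he => ?_
    apply_fun D at he
    simp_rw [hadd] at he
    exact (add_lt_add_of_lt_of_le (((hp a ha)).lt_of_ne <| hD.ne_iff.2 hne)
      (hq a' ha')).ne he
  · refine fun h => Finset.sum_eq_zero fun a _ => ite_eq_right_iff.mpr fun _ => ?_
    rw [Finsupp.notMem_support_iff.mp h, zero_mul]

/-- Units of `ℤ[ℤ²]` are trivial. -/
lemma unit_trivial (f g : AddMonoidAlgebra ℤ (ℤ × ℤ)) (hfg : f * g = 1) :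
    ∃ d : ℤ × ℤ, f = AddMonoidAlgebra.single d (1 : ℤ) ∨
      f = AddMonoidAlgebra.single d (-1 : ℤ) := by
  classical
  have hf0 : f ≠ 0 := by rintro rfl; simp at hfg
  have hg0 : g ≠ 0 := by rintro rfl; simp at hfg
  have hfs : f.coeff.support.Nonempty :=
    Finsupp.support_nonempty_iff.2 (fun h => hf0 (AddMonoidAlgebra.coeff_eq_zero.1 h))
  have hgs : g.coeff.support.Nonempty :=
    Finsupp.support_nonempty_iff.2 (fun h => hg0 (AddMonoidAlgebra.coeff_eq_zero.1 h))
  -- max and min elements of supports under lex order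
  obtain ⟨Mf, hMf, hMf'⟩ := Finset.exists_max_image f.coeff.support (toLex : ℤ × ℤ → ℤ ×ₗ ℤ) hfs
  obtain ⟨mf, hmf, hmf'⟩ := Finset.exists_min_image f.coeff.support (toLex : ℤ × ℤ → ℤ ×ₗ ℤ) hfs
  obtain ⟨Mg, hMg, hMg'⟩ := Finset.exists_max_image g.coeff.support (toLex : ℤ × ℤ → ℤ ×ₗ ℤ) hgs
  obtain ⟨mg, hmg, hmg'⟩ := Finset.exists_min_image g.coeff.support (toLex : ℤ × ℤ → ℤ ×ₗ ℤ) hgs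
  have haddL : ∀ a b : ℤ × ℤ, toLex (a + b) = toLex a + toLex b := fun _ _ => rfl
  have hDL : Function.Injective (toLex : ℤ × ℤ → ℤ ×ₗ ℤ) := toLex.injective
  have htop : (f * g).coeff (Mf + Mg) = f.coeff Mf * g.coeff Mg :=
    mul_apply_top (toLex : ℤ × ℤ → ℤ ×ₗ ℤ) haddL hDL f g Mf Mg hMf' hMg'
  have hbot : (f * g).coeff (mf + mg) = f.coeff mf * g.coeff mg := by
    refine mul_apply_top (B := (ℤ ×ₗ ℤ)ᵒᵈ)
      (fun a => OrderDual.toDual (toLex a)) (fun _ _ => rfl)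
      (OrderDual.toDual.injective.comp hDL) f g mf mg ?_ ?_
    · exact fun a ha => OrderDual.toDual_le_toDual.2 (hmf' a ha)
    · exact fun a ha => OrderDual.toDual_le_toDual.2 (hmg' a ha)
  have h1 : (1 : AddMonoidAlgebra ℤ (ℤ × ℤ)).coeff = Finsupp.single 0 1 := by
    rw [AddMonoidAlgebra.one_def]; rfl
  have hfMf : f.coeff Mf ≠ 0 := Finsupp.mem_support_iff.1 hMf
  have hgMg : g.coeff Mg ≠ 0 := Finsupp.mem_support_iff.1 hMg
  have hfmf : f.coeff mf ≠ 0 := Finsupp.mem_support_iff.1 hmf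
  have hgmg : g.coeff mg ≠ 0 := Finsupp.mem_support_iff.1 hmg
  have hMsum : Mf + Mg = 0 := by
    by_contra hne
    rw [hfg, h1, Finsupp.single_apply, if_neg (fun h => hne h.symm)] at htop
    exact mul_ne_zero hfMf hgMg htop.symm
  have hmsum : mf + mg = 0 := by
    by_contra hne
    rw [hfg, h1, Finsupp.single_apply, if_neg (fun h => hne h.symm)] at hbot
    exact mul_ne_zero hfmf hgmg hbot.symm
  -- conclude mf = Mf
  have hle1 : toLex mf ≤ toLex Mf := hmf' Mf hMf
  have hle2 : toLex mg ≤ toLex Mg := hmg' Mg hMg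
  have hsum : toLex mf + toLex mg = toLex Mf + toLex Mg := by
    rw [← haddL, ← haddL, hmsum, hMsum]
  have hmfMf : mf = Mf := by
    apply hDL
    refine le_antisymm hle1 ?_
    have h2 : toLex Mf + toLex Mg ≤ toLex mf + toLex Mg := by
      rw [← hsum]; exact add_le_add_right hle2 _
    exact le_of_add_le_add_right h2
  -- support of f is {Mf}
  have hsupp : f.coeff.support ⊆ {Mf} := by
    intro a ha
    rw [Finset.mem_singleton]
    exact hDL (le_antisymm (hMf' a ha) (hmfMf ▸ hmf' a ha))
  have hfs : f = AddMonoidAlgebra.single Mf (f.coeff Mf) :=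
    AddMonoidAlgebra.coeff_injective (Finsupp.eq_single_iff.2 ⟨hsupp, rfl⟩)
  -- the coefficient is ±1
  have hco : f.coeff Mf * g.coeff Mg = 1 := by
    rw [← htop, hfg, h1, Finsupp.single_apply, if_pos hMsum.symm]
  have : f.coeff Mf = 1 ∨ f.coeff Mf = -1 := Int.isUnit_iff.1 (IsUnit.of_mul_eq_one _ hco)
  exact ⟨Mf, this.imp (fun h => hfs.trans (by rw [h]))
    (fun h => hfs.trans (by rw [h]))⟩

/-- In the Laurent polynomial ring `R = Z[x₁^{±1}, x₂^{±1}]` (the group ring of `Z²`),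
let `p₁ = x₂ - 1` and `p₂ = 1 - x₁` (the abelianized Fox derivatives of `[x₁,x₂]`).
If `w ∈ R` and the ideal generated by `w·p₁, w·p₂` equals the ideal generated by
`p₁, p₂`, then `w` is a unit of `R`, i.e. `w = ± g` for a monomial `g`. -/
theorem stmt12 (w : AddMonoidAlgebra ℤ (ℤ × ℤ))
    (p₁ p₂ : AddMonoidAlgebra ℤ (ℤ × ℤ))
    (hp₁ : p₁ = AddMonoidAlgebra.single ((0 : ℤ), (1 : ℤ)) (1 : ℤ) - 1)
    (hp₂ : p₂ = 1 - AddMonoidAlgebra.single ((1 : ℤ), (0 : ℤ)) (1 : ℤ))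
    (h : Ideal.span {w * p₁, w * p₂} = Ideal.span {p₁, p₂}) :
    IsUnit w ∧ ∃ g : ℤ × ℤ,
      w = AddMonoidAlgebra.single g (1 : ℤ) ∨
      w = AddMonoidAlgebra.single g (-1 : ℤ) := by
  have h1 : (1 : AddMonoidAlgebra ℤ (ℤ × ℤ)) = AddMonoidAlgebra.single 0 1 :=
    AddMonoidAlgebra.one_def
  have hp₁0 : p₁ ≠ 0 := by
    rw [hp₁, sub_ne_zero, h1]
    intro he
    have := (AddMonoidAlgebra.single_left_injective (one_ne_zero (α := ℤ))) he
    simp [Prod.ext_iff] at this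
  have hp₂0 : p₂ ≠ 0 := by
    rw [hp₂, sub_ne_zero, h1]
    intro he
    have := (AddMonoidAlgebra.single_left_injective (one_ne_zero (α := ℤ))) he.symm
    simp [Prod.ext_iff] at this
  have hm₁ : p₁ ∈ Ideal.span {w * p₁, w * p₂} := by
    rw [h]; exact Ideal.subset_span (Set.mem_insert _ _)
  have hm₂ : p₂ ∈ Ideal.span {w * p₁, w * p₂} := by
    rw [h]; exact Ideal.subset_span (Set.mem_insert_of_mem _ rfl)
  obtain ⟨a, b, hab⟩ := Ideal.mem_span_pair.1 hm₁
  obtain ⟨c, d, hcd⟩ := Ideal.mem_span_pair.1 hm₂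
  -- determinant trick
  have key : ((1 - w * a) * (1 - w * d)) * (p₁ * p₂) = (w * b * (w * c)) * (p₁ * p₂) := by
    linear_combination (-(1 - w * d) * p₂) * hab + (-(w * b) * p₂) * hcd
  have hpp : p₁ * p₂ ≠ 0 := mul_ne_zero hp₁0 hp₂0
  have key2 : (1 - w * a) * (1 - w * d) = w * b * (w * c) := mul_right_cancel₀ hpp key
  have hu : w * (a + d - w * a * d + w * b * c) = 1 := by linear_combination -key2
  obtain ⟨g, hg⟩ := unit_trivial w _ hu
  exact ⟨IsUnit.of_mul_eq_one _ hu, g, hg⟩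
end

section
/- There are no Δ-primitive elements in the free metabelian group M_n when n is odd; that is, no element u ∈ M_n has the property that its abelianized Fox derivatives d₁(u),…,d_n(u) generate the augmentation ideal Δ of Z[Z^n] as an ideal. -/
/-- The abelianization map `F_n →* Z^n`. -/
noncomputable def abel (n : ℕ) : FreeGroup (Fin n) →* Multiplicative (Fin n → ℤ) :=
  FreeGroup.lift fun i => Multiplicative.ofAdd (Pi.single i 1)

/-- The induced ring homomorphism `ZF → Z[Z^n]`. -/
noncomputable def abelRing (n : ℕ) :
    MonoidAlgebra ℤ (FreeGroup (Fin n)) →+*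
      MonoidAlgebra ℤ (Multiplicative (Fin n → ℤ)) :=
  MonoidAlgebra.mapDomainRingHom ℤ (abel n)

/-- The augmentation homomorphism `Z[Z^n] → Z`. -/
noncomputable def augA (n : ℕ) :
    MonoidAlgebra ℤ (Multiplicative (Fin n → ℤ)) →ₐ[ℤ] ℤ :=
  MonoidAlgebra.lift ℤ ℤ (Multiplicative (Fin n → ℤ)) 1


namespace S15

open MvPolynomial

variable {n : ℕ}

/-- degree of a monomial exponent -/
def dg (μ : Fin n →₀ ℕ) : ℕ := μ.sum fun _ e => e

lemma dg_add (a b : Fin n →₀ ℕ) : dg (a + b) = dg a + dg b :=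
  Finsupp.sum_add_index' (fun _ => rfl) (fun _ _ _ => rfl)

lemma apply_le_dg (μ : Fin n →₀ ℕ) (a : Fin n) : μ a ≤ dg μ := by
  by_cases ha : a ∈ μ.support
  · exact Finset.single_le_sum (fun i _ => Nat.zero_le _) ha
  · simp [Finsupp.notMem_support_iff.mp ha]

lemma dg_single (a : Fin n) (b : ℕ) : dg (Finsupp.single a b) = b := by
  simp [dg, Finsupp.sum_single_index]

/-- the ideal of polynomials with all coefficients in degrees `< k` vanishing -/
noncomputable def Did (n k : ℕ) : Ideal (MvPolynomial (Fin n) ℤ) where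
  carrier := {q | ∀ μ : Fin n →₀ ℕ, dg μ < k → coeff μ q = 0}
  zero_mem' := by intro μ _; simp
  add_mem' := by intro a b ha hb μ h; simp [ha μ h, hb μ h]
  smul_mem' := by
    intro r q hq μ h
    rw [smul_eq_mul, coeff_mul]
    apply Finset.sum_eq_zero
    rintro ⟨a, b⟩ hab
    simp only [Finset.HasAntidiagonal.mem_antidiagonal] at hab
    dsimp only
    have hb : dg b ≤ dg μ := by
      rw [← hab, dg_add]; exact Nat.le_add_left _ _
    rw [hq b (lt_of_le_of_lt hb h), mul_zero]

lemma mem_Did {k : ℕ} {q : MvPolynomial (Fin n) ℤ} (h : q ∈ Did n k)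
    (μ : Fin n →₀ ℕ) (hμ : dg μ < k) : coeff μ q = 0 := h μ hμ

lemma Did_mul (j k : ℕ) : Did n j * Did n k ≤ Did n (j + k) := by
  rw [Ideal.mul_le]
  intro r hr s hs μ h
  rw [coeff_mul]
  apply Finset.sum_eq_zero
  rintro ⟨a, b⟩ hab
  simp only [Finset.HasAntidiagonal.mem_antidiagonal] at hab
  dsimp only
  have hd : dg a + dg b < j + k := by rw [← dg_add, hab]; exact h
  rcases lt_or_ge (dg a) j with h1 | h1
  · rw [hr a h1, zero_mul]
  · rw [hs b (by omega), mul_zero]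

/-- the ideal generated by the variables -/
noncomputable def Yid (n : ℕ) : Ideal (MvPolynomial (Fin n) ℤ) :=
  Ideal.span (Set.range X)

lemma Yid_le : Yid n ≤ Did n 1 := by
  rw [Yid, Ideal.span_le]
  rintro _ ⟨i, rfl⟩ μ h
  have hμ : μ = 0 := by
    ext a
    have := apply_le_dg μ a
    simp only [Finsupp.coe_zero, Pi.zero_apply]
    omega
  subst hμ
  simp [coeff_X']

lemma Yid_sq_le : Yid n ^ 2 ≤ Did n 2 := by
  rw [pow_two]
  exact le_trans (Ideal.mul_mono Yid_le Yid_le) (Did_mul 1 1)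

lemma Yid_cube_le : Yid n ^ 3 ≤ Did n 3 := by
  have : Yid n ^ 3 = Yid n ^ 2 * Yid n := by ring
  rw [this]
  exact le_trans (Ideal.mul_mono Yid_sq_le Yid_le) (Did_mul 2 1)

/-- truncated polynomial ring -/
abbrev Rq (n : ℕ) := MvPolynomial (Fin n) ℤ ⧸ (Yid n ^ 3)

noncomputable def pr (n : ℕ) : MvPolynomial (Fin n) ℤ →+* Rq n := Ideal.Quotient.mk _

lemma pr_surj : Function.Surjective (pr n) := Ideal.Quotient.mk_surjective

lemma pr_X_cube (i : Fin n) : (pr n (X i)) ^ 3 = 0 := by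
  rw [← map_pow]
  show (Ideal.Quotient.mk (Yid n ^ 3)) (X i ^ 3) = 0
  refine Ideal.Quotient.eq_zero_iff_mem.mpr (Ideal.pow_mem_pow ?_ 3)
  exact Ideal.subset_span (Set.mem_range_self i)

/-- the unit `1 + yᵢ` in `Rq` -/
noncomputable def un (n : ℕ) (i : Fin n) : (Rq n)ˣ where
  val := 1 + pr n (X i)
  inv := 1 - pr n (X i) + (pr n (X i)) ^ 2
  val_inv := by have := pr_X_cube (n := n) i; linear_combination this
  inv_val := by have := pr_X_cube (n := n) i; linear_combination this

/-- image of `Yid` in `Rq` -/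
noncomputable def Jid (n : ℕ) : Ideal (Rq n) := (Yid n).map (pr n)

/-- the subgroup of units congruent to 1 mod `Jid` -/
noncomputable def Hgrp (n : ℕ) : Subgroup (Rq n)ˣ where
  carrier := {r | (r : Rq n) - 1 ∈ Jid n}
  one_mem' := by simp
  mul_mem' := by
    intro a b ha hb
    have : ((a * b : (Rq n)ˣ) : Rq n) - 1
        = (a : Rq n) * ((b : Rq n) - 1) + ((a : Rq n) - 1) := by
      push_cast; ring
    rw [Set.mem_setOf_eq, this]
    exact add_mem (Ideal.mul_mem_left _ _ hb) ha
  inv_mem' := by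
    intro a ha
    have : ((a⁻¹ : (Rq n)ˣ) : Rq n) - 1
        = -(((a⁻¹ : (Rq n)ˣ) : Rq n) * ((a : Rq n) - 1)) := by
      rw [mul_sub]
      rw [show ((a⁻¹ : (Rq n)ˣ) : Rq n) * (a : Rq n) = 1 from Units.inv_mul a]
      ring
    rw [Set.mem_setOf_eq, this]
    exact neg_mem (Ideal.mul_mem_left _ _ ha)

lemma un_mem_Hgrp (i : Fin n) : un n i ∈ Hgrp n := by
  have h1 : ((un n i : (Rq n)ˣ) : Rq n) - 1 = pr n (X i) := by
    rw [show ((un n i : (Rq n)ˣ) : Rq n) = 1 + pr n (X i) from rfl]; ring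
  show un n i ∈ {r : (Rq n)ˣ | (r : Rq n) - 1 ∈ Jid n}
  rw [Set.mem_setOf_eq, h1]
  exact Ideal.mem_map_of_mem _ (Ideal.subset_span ⟨i, rfl⟩)

/-- the monoid hom `Z^n → (Rq n)ˣ`, `g ↦ ∏ (1+yᵢ)^(gᵢ)` -/
noncomputable def psi (n : ℕ) : Multiplicative (Fin n → ℤ) →* (Rq n)ˣ where
  toFun g := ∏ i, (un n i) ^ (Multiplicative.toAdd g i)
  map_one' := by simp
  map_mul' g h := by
    rw [← Finset.prod_mul_distrib]
    refine Finset.prod_congr rfl fun i _ => ?_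
    rw [← zpow_add]
    rfl

lemma psi_mem_Hgrp (g : Multiplicative (Fin n → ℤ)) : psi n g ∈ Hgrp n := by
  show (∏ i, (un n i) ^ (Multiplicative.toAdd g i)) ∈ Hgrp n
  refine prod_mem fun i _ => ?_
  exact
    Subgroup.zpow_mem (Hgrp n) (un_mem_Hgrp i) (Multiplicative.toAdd g i)

/-- the algebra hom `Z[Z^n] → Rq n` -/
noncomputable def phi (n : ℕ) :
    MonoidAlgebra ℤ (Multiplicative (Fin n → ℤ)) →ₐ[ℤ] Rq n :=
  MonoidAlgebra.lift ℤ (Rq n) (Multiplicative (Fin n → ℤ))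
    ((Units.coeHom (Rq n)).comp (psi n))

set_option synthInstance.maxHeartbeats 400000 in
lemma phi_sub_aug_mem (a : MonoidAlgebra ℤ (Multiplicative (Fin n → ℤ))) :
    phi n a - algebraMap ℤ (Rq n) (augA n a) ∈ Jid n := by
  induction a using MonoidAlgebra.induction_linear with
  | zero => simp
  | add f g hf hg =>
      have : phi n (f + g) - algebraMap ℤ (Rq n) (augA n (f + g))
          = (phi n f - algebraMap ℤ (Rq n) (augA n f))
            + (phi n g - algebraMap ℤ (Rq n) (augA n g)) := by
        simp only [map_add]; ring
      rw [this]; exact add_mem hf hg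
  | single g c =>
      have h1 : phi n (MonoidAlgebra.single g c) = c • ((psi n g : (Rq n)ˣ) : Rq n) := by
        rw [phi, MonoidAlgebra.lift_single]; rfl
      have h2 : augA n (MonoidAlgebra.single g c) = c := by
        rw [augA, MonoidAlgebra.lift_single]; simp
      rw [h1, h2]
      have : c • ((psi n g : (Rq n)ˣ) : Rq n) - algebraMap ℤ (Rq n) c
          = (c : Rq n) * (((psi n g : (Rq n)ˣ) : Rq n) - 1) := by
        simp only [algebraMap_int_eq, eq_intCast, zsmul_eq_mul]; ring
      rw [this]
      exact Ideal.mul_mem_left _ _ (psi_mem_Hgrp g)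

/-- the dual-number character detecting the `i`-th exponent -/
noncomputable def chiHom (n : ℕ) (i : Fin n) :
    Multiplicative (Fin n → ℤ) →* DualNumber ℤ where
  toFun g := 1 + (Multiplicative.toAdd g i) • DualNumber.eps
  map_one' := by simp
  map_mul' g h := by
    have ht : Multiplicative.toAdd (g * h) i
        = Multiplicative.toAdd g i + Multiplicative.toAdd h i := rfl
    have hε : DualNumber.eps * DualNumber.eps = (0 : DualNumber ℤ) :=
      DualNumber.eps_mul_eps
    rw [ht, add_smul]
    simp only [zsmul_eq_mul]
    linear_combination (-(Multiplicative.toAdd g i : DualNumber ℤ)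
      * (Multiplicative.toAdd h i : DualNumber ℤ)) * hε

noncomputable def chi (n : ℕ) (i : Fin n) :
    MonoidAlgebra ℤ (Multiplicative (Fin n → ℤ)) →ₐ[ℤ] DualNumber ℤ :=
  MonoidAlgebra.lift ℤ (DualNumber ℤ) (Multiplicative (Fin n → ℤ)) (chiHom n i)

lemma chi_fst (i : Fin n) (a : MonoidAlgebra ℤ (Multiplicative (Fin n → ℤ))) :
    TrivSqZeroExt.fst (chi n i a) = augA n a := by
  have : (TrivSqZeroExt.fstHom ℤ ℤ ℤ).comp (chi n i) = augA n := by
    apply MonoidAlgebra.algHom_ext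
    intro g
    show TrivSqZeroExt.fst (chi n i (MonoidAlgebra.of ℤ _ g))
        = augA n (MonoidAlgebra.of ℤ _ g)
    rw [chi, augA, MonoidAlgebra.lift_of, MonoidAlgebra.lift_of]
    rw [show (chiHom n i) g = 1 + (Multiplicative.toAdd g i) • DualNumber.eps from rfl]
    rw [TrivSqZeroExt.fst_add, TrivSqZeroExt.fst_one, TrivSqZeroExt.fst_smul]
    rw [show TrivSqZeroExt.fst (DualNumber.eps : DualNumber ℤ) = 0 from
      TrivSqZeroExt.fst_inr _ _]
    simp
    exact Subsingleton.elim _ _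
  calc TrivSqZeroExt.fst (chi n i a) = ((TrivSqZeroExt.fstHom ℤ ℤ ℤ).comp (chi n i)) a := rfl
    _ = augA n a := by rw [this]

end S15

set_option maxHeartbeats 1000000 in
set_option synthInstance.maxHeartbeats 1000000 in
/-- There are no `Δ`-primitive elements in the free metabelian group `M_n` for odd
`n`: no element `u` has abelianized Fox derivatives generating the augmentation ideal
`Δ` of `Z[Z^n]` as an ideal.  (Here `d` is the system of left Fox derivatives on `ZF`,
characterized by `a = ε(a)·1 + Σ_j d_j(a)(x_j - 1)`, and the abelianized Fox
derivatives of `u` are the images of the `d_j(u)` in `Z[Z^n]`; since abelianized Fox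
derivatives depend only on the image of `u` in `M_n = F_n/F_n''`, quantifying over
`u ∈ F_n` is equivalent to quantifying over `M_n`.) -/
theorem stmt15 (n : ℕ) (hn : Odd n)
    (d : MonoidAlgebra ℤ (FreeGroup (Fin n)) → Fin n →
      MonoidAlgebra ℤ (FreeGroup (Fin n)))
    (hd : ∀ a : MonoidAlgebra ℤ (FreeGroup (Fin n)),
      a = algebraMap ℤ (MonoidAlgebra ℤ (FreeGroup (Fin n))) (aug n a) +
        ∑ j : Fin n, d a j *
          (MonoidAlgebra.of ℤ (FreeGroup (Fin n)) (FreeGroup.of j) - 1)) :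
    ¬ ∃ u : FreeGroup (Fin n),
      Ideal.span (Set.range fun i =>
          abelRing n (d (MonoidAlgebra.of ℤ (FreeGroup (Fin n)) u) i)) =
        RingHom.ker (augA n).toRingHom := by
  classical
  rintro ⟨u, hspan⟩
  set Df : Fin n → MonoidAlgebra ℤ (Multiplicative (Fin n → ℤ)) :=
    fun i => abelRing n (d (MonoidAlgebra.of ℤ (FreeGroup (Fin n)) u) i) with hDf
  have hker : Ideal.span (Set.range Df) = RingHom.ker (augA n).toRingHom := hspan
  have hDmem : ∀ j, augA n (Df j) = 0 := by
    intro j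
    have h : Df j ∈ RingHom.ker (augA n).toRingHom := by
      rw [← hker]; exact Ideal.subset_span (Set.mem_range_self j)
    exact h
  -- the group elements `T j`
  set T : Fin n → MonoidAlgebra ℤ (Multiplicative (Fin n → ℤ)) :=
    fun j => MonoidAlgebra.of ℤ (Multiplicative (Fin n → ℤ))
      (Multiplicative.ofAdd (Pi.single j 1)) with hT
  -- the basic equation in `Z[Z^n]`
  have haug : aug n (MonoidAlgebra.of ℤ (FreeGroup (Fin n)) u) = 1 := by
    rw [aug, MonoidAlgebra.lift_of]; rfl
  have habelRing_of : ∀ w : FreeGroup (Fin n),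
      abelRing n (MonoidAlgebra.of ℤ (FreeGroup (Fin n)) w)
        = MonoidAlgebra.of ℤ (Multiplicative (Fin n → ℤ)) (abel n w) := by
    intro w
    show abelRing n (MonoidAlgebra.single w 1) = MonoidAlgebra.single (abel n w) 1
    rw [abelRing]
    exact MonoidAlgebra.mapDomain_single
  set gU : Multiplicative (Fin n → ℤ) := abel n u with hgU
  have hEq : MonoidAlgebra.of ℤ (Multiplicative (Fin n → ℤ)) gU
      = 1 + ∑ j, Df j * (T j - 1) := by
    have h0 := hd (MonoidAlgebra.of ℤ (FreeGroup (Fin n)) u)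
    rw [haug] at h0
    have h1 := congrArg (abelRing n) h0
    have habelof : ∀ j : Fin n,
        abel n (FreeGroup.of j) = Multiplicative.ofAdd (Pi.single j 1) :=
      fun j => FreeGroup.lift_apply_of
    simp only [map_add, map_one, map_sum, map_mul, map_sub,
      habelRing_of, habelof] at h1
    exact h1
  -- step: `gU = 1` via dual numbers
  have hg1 : gU = 1 := by
    have h2 : ∀ i : Fin n, Multiplicative.toAdd gU i = 0 := by
      intro i
      have h2 := congrArg (S15.chi n i) hEq
      rw [map_add, map_one, map_sum] at h2
      have hL : S15.chi n i (MonoidAlgebra.of ℤ (Multiplicative (Fin n → ℤ)) gU)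
          = 1 + (Multiplicative.toAdd gU i) • DualNumber.eps := by
        rw [S15.chi, MonoidAlgebra.lift_of]; rfl
      have hR : ∀ j, TrivSqZeroExt.snd (S15.chi n i (Df j * (T j - 1))) = 0 := by
        intro j
        rw [map_mul]
        have hTj : S15.chi n i (T j - 1)
            = ((Pi.single j 1 : Fin n → ℤ) i) • DualNumber.eps := by
          rw [hT, map_sub, map_one, S15.chi, MonoidAlgebra.lift_of]
          rw [show (S15.chiHom n i) (Multiplicative.ofAdd (Pi.single j 1))
            = 1 + ((Pi.single j 1 : Fin n → ℤ) i) • DualNumber.eps from rfl]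
          ring
        rw [hTj, TrivSqZeroExt.snd_mul]
        rw [TrivSqZeroExt.snd_smul, TrivSqZeroExt.fst_smul]
        rw [show TrivSqZeroExt.snd (DualNumber.eps : DualNumber ℤ) = 1 from
          TrivSqZeroExt.snd_inr _ _]
        rw [show TrivSqZeroExt.fst (DualNumber.eps : DualNumber ℤ) = 0 from
          TrivSqZeroExt.fst_inr _ _]
        rw [S15.chi_fst, hDmem j]
        simp
      have h3 := congrArg TrivSqZeroExt.snd h2
      rw [hL] at h3
      rw [TrivSqZeroExt.snd_add, TrivSqZeroExt.snd_one, TrivSqZeroExt.snd_smul] at h3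
      rw [show TrivSqZeroExt.snd (DualNumber.eps : DualNumber ℤ) = 1 from
        TrivSqZeroExt.snd_inr _ _] at h3
      rw [TrivSqZeroExt.snd_add, TrivSqZeroExt.snd_one] at h3
      have hsum : TrivSqZeroExt.snd (∑ j, S15.chi n i (Df j * (T j - 1)))
          = ∑ j, TrivSqZeroExt.snd (S15.chi n i (Df j * (T j - 1))) :=
        map_sum (TrivSqZeroExt.sndHom ℤ ℤ) _ _
      rw [hsum, Finset.sum_congr rfl fun j _ => hR j] at h3
      simpa using h3
    have : Multiplicative.toAdd gU = Multiplicative.toAdd (1 : Multiplicative (Fin n → ℤ)) := by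
      funext i; rw [h2 i]; rfl
    exact Multiplicative.toAdd.injective this
  have hS0 : (∑ j, Df j * (T j - 1)) = 0 := by
    have h := hEq
    rw [hg1, map_one] at h
    exact (left_eq_add.mp h)
  -- map to the truncated ring
  have hphiT : ∀ j, S15.phi n (T j) = 1 + S15.pr n (MvPolynomial.X j) := by
    intro j
    rw [hT, S15.phi, MonoidAlgebra.lift_of]
    show ((S15.psi n (Multiplicative.ofAdd (Pi.single j 1)) : (S15.Rq n)ˣ) : S15.Rq n) = _
    have hps : S15.psi n (Multiplicative.ofAdd (Pi.single j 1)) = S15.un n j := by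
      show (∏ i, S15.un n i ^
        (Multiplicative.toAdd (Multiplicative.ofAdd (Pi.single j 1)) i)) = S15.un n j
      rw [Finset.prod_eq_single j]
      · rw [show Multiplicative.toAdd (Multiplicative.ofAdd (Pi.single j 1)) j
          = Pi.single j 1 j from rfl, Pi.single_eq_same, zpow_one]
      · intro b _ hb
        rw [show Multiplicative.toAdd (Multiplicative.ofAdd (Pi.single j 1)) b
          = Pi.single j 1 b from rfl, Pi.single_eq_of_ne hb, zpow_zero]
      · intro hj; exact absurd (Finset.mem_univ j) hj
    rw [hps]; rfl
  have hphiT' : ∀ j, S15.phi n (T j - 1) = S15.pr n (MvPolynomial.X j) := by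
    intro j; rw [map_sub, map_one, hphiT]; ring
  have hDJ : ∀ j, S15.phi n (Df j) ∈ S15.Jid n := by
    intro j
    have h := S15.phi_sub_aug_mem (Df j)
    rwa [hDmem j, map_zero, sub_zero] at h
  choose p hpY hpEq using fun j =>
    (Ideal.mem_map_iff_of_surjective (S15.pr n) S15.pr_surj).mp (hDJ j)
  -- the syzygy lies in `Y^3`
  have hq3 : (∑ j, p j * MvPolynomial.X j) ∈ S15.Yid n ^ 3 := by
    rw [← Ideal.Quotient.eq_zero_iff_mem]
    have ha : (Ideal.Quotient.mk (S15.Yid n ^ 3)) (∑ j, p j * MvPolynomial.X j)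
        = ∑ j, S15.phi n (Df j * (T j - 1)) := by
      rw [map_sum]
      refine Finset.sum_congr rfl fun j _ => ?_
      rw [show (Ideal.Quotient.mk (S15.Yid n ^ 3)) (p j * MvPolynomial.X j)
        = S15.pr n (p j) * S15.pr n (MvPolynomial.X j) from map_mul _ _ _]
      rw [hpEq j, map_mul, hphiT' j]
    rw [ha, ← map_sum, hS0, map_zero]
  -- the matrix of linear coefficients
  set M : Matrix (Fin n) (Fin n) ℤ :=
    fun k j => MvPolynomial.coeff (Finsupp.single k 1) (p j) with hM
  have hq3' := S15.Yid_cube_le hq3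
  have hMdiag : ∀ i, M i i = 0 := by
    intro i
    have hμ : S15.dg (Finsupp.single i 1 + Finsupp.single i 1) < 3 := by
      rw [S15.dg_add, S15.dg_single]; omega
    have h := S15.mem_Did hq3' _ hμ
    rw [MvPolynomial.coeff_sum] at h
    have hterm : ∀ j, MvPolynomial.coeff (Finsupp.single i 1 + Finsupp.single i 1)
        (p j * MvPolynomial.X j) = if j = i then M i i else 0 := by
      intro j
      by_cases hj : j = i
      · subst hj
        rw [MvPolynomial.coeff_mul_X, if_pos rfl]
      · rw [MvPolynomial.coeff_mul_X', if_neg hj, if_neg]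
        simp [Finsupp.mem_support_iff, Finsupp.add_apply, Finsupp.single_apply,
          Ne.symm hj]
    rw [Finset.sum_congr rfl fun j _ => hterm j, Finset.sum_ite_eq'] at h
    simpa using h
  have hoff : ∀ i k, i ≠ k → M k i + M i k = 0 := by
    intro i k hik
    have hμ : S15.dg (Finsupp.single i 1 + Finsupp.single k 1) < 3 := by
      rw [S15.dg_add, S15.dg_single, S15.dg_single]; omega
    have h := S15.mem_Did hq3' _ hμ
    rw [MvPolynomial.coeff_sum] at h
    have hterm : ∀ j, MvPolynomial.coeff (Finsupp.single i 1 + Finsupp.single k 1)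
        (p j * MvPolynomial.X j)
        = (if j = i then M k i else 0) + (if j = k then M i k else 0) := by
      intro j
      by_cases hj : j = i
      · subst hj
        rw [add_comm (Finsupp.single j 1) (Finsupp.single k 1), MvPolynomial.coeff_mul_X]
        rw [if_pos rfl, if_neg hik, add_zero]
      · by_cases hk : j = k
        · subst hk
          rw [MvPolynomial.coeff_mul_X, if_neg hj, if_pos rfl, zero_add]
        · rw [MvPolynomial.coeff_mul_X', if_neg hj, if_neg hk, if_neg]
          · ring
          · simp [Finsupp.mem_support_iff, Finsupp.add_apply, Finsupp.single_apply,
              Ne.symm hj, Ne.symm hk]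
    rw [Finset.sum_congr rfl fun j _ => hterm j, Finset.sum_add_distrib,
      Finset.sum_ite_eq', Finset.sum_ite_eq'] at h
    simpa using h
  have hskew : ∀ i k, M i k + M k i = 0 := by
    intro i k
    by_cases hik : i = k
    · subst hik; rw [hMdiag i]; ring
    · have := hoff i k hik; omega
  -- generation: the matrix is invertible
  have hTker : ∀ i, (T i - 1) ∈ Ideal.span (Set.range Df) := by
    intro i
    rw [hker]
    show augA n (T i - 1) = 0
    rw [map_sub, map_one, hT, augA, MonoidAlgebra.lift_of]
    simp
  have hc := fun i => (Submodule.mem_span_range_iff_exists_fun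
    (MonoidAlgebra ℤ (Multiplicative (Fin n → ℤ)))).mp (hTker i)
  choose c hcEq using hc
  set A : Matrix (Fin n) (Fin n) ℤ := fun i j => augA n (c i j) with hA
  have hXi : ∀ i, (MvPolynomial.X i - ∑ j, ((A i j : MvPolynomial (Fin n) ℤ)) * p j)
      ∈ S15.Yid n ^ 2 := by
    intro i
    -- the residual sum lies in `J^2`
    have hw : ∀ j, S15.phi n (c i j) - algebraMap ℤ (S15.Rq n) (A i j) ∈ S15.Jid n :=
      fun j => S15.phi_sub_aug_mem (c i j)
    have hres : (∑ j, (S15.phi n (c i j) - algebraMap ℤ (S15.Rq n) (A i j))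
        * S15.pr n (p j)) ∈ S15.Jid n ^ 2 := by
      refine Ideal.sum_mem _ fun j _ => ?_
      rw [pow_two]
      exact Ideal.mul_mem_mul (hw j)
        (Ideal.mem_map_of_mem _ (hpY j))
    have hres2 : S15.pr n (MvPolynomial.X i)
        - ∑ j, algebraMap ℤ (S15.Rq n) (A i j) * S15.pr n (p j)
        = ∑ j, (S15.phi n (c i j) - algebraMap ℤ (S15.Rq n) (A i j)) * S15.pr n (p j) := by
      have hphiX : S15.pr n (MvPolynomial.X i) = ∑ j, S15.phi n (c i j) * S15.pr n (p j) := by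
        have := congrArg (S15.phi n) (hcEq i)
        rw [map_sum, hphiT' i] at this
        rw [← this]
        refine Finset.sum_congr rfl fun j _ => ?_
        rw [smul_eq_mul, map_mul, hpEq j]
      rw [hphiX, ← Finset.sum_sub_distrib]
      refine Finset.sum_congr rfl fun j _ => ?_
      ring
    have hmem2 : S15.pr n (MvPolynomial.X i)
        - ∑ j, algebraMap ℤ (S15.Rq n) (A i j) * S15.pr n (p j) ∈ S15.Jid n ^ 2 := by
      rw [hres2]; exact hres
    have hmap : S15.Jid n ^ 2 = (S15.Yid n ^ 2).map (S15.pr n) := by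
      rw [Ideal.map_pow]; rfl
    rw [hmap] at hmem2
    obtain ⟨z, hz, hzEq⟩ := (Ideal.mem_map_iff_of_surjective (S15.pr n) S15.pr_surj).mp hmem2
    have hker3 : (MvPolynomial.X i - ∑ j, ((A i j : MvPolynomial (Fin n) ℤ)) * p j) - z
        ∈ S15.Yid n ^ 3 := by
      rw [← Ideal.Quotient.eq_zero_iff_mem]
      have : (Ideal.Quotient.mk (S15.Yid n ^ 3))
          ((MvPolynomial.X i - ∑ j, ((A i j : MvPolynomial (Fin n) ℤ)) * p j) - z)
          = (S15.pr n (MvPolynomial.X i)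
            - ∑ j, algebraMap ℤ (S15.Rq n) (A i j) * S15.pr n (p j)) - S15.pr n z := by
        have hterm2 : ∀ j, (Ideal.Quotient.mk (S15.Yid n ^ 3))
            ((A i j : MvPolynomial (Fin n) ℤ) * p j)
            = algebraMap ℤ (S15.Rq n) (A i j) * S15.pr n (p j) := by
          intro j
          rw [map_mul, map_intCast]
          simp only [algebraMap_int_eq, eq_intCast]
          rfl
        rw [map_sub, map_sub, map_sum, Finset.sum_congr rfl fun j _ => hterm2 j]
        rfl
      rw [this, hzEq, sub_self]
    have hle : S15.Yid n ^ 3 ≤ S15.Yid n ^ 2 := Ideal.pow_le_pow_right (by omega)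
    have := Submodule.add_mem _ (hle hker3) hz
    simpa using this
  have hAM : A * M.transpose = 1 := by
    ext i k
    have h := S15.mem_Did (S15.Yid_sq_le (hXi i)) (Finsupp.single k 1)
      (by rw [S15.dg_single]; omega)
    rw [MvPolynomial.coeff_sub, MvPolynomial.coeff_sum] at h
    have hterm : ∀ j, MvPolynomial.coeff (Finsupp.single k 1)
        ((A i j : MvPolynomial (Fin n) ℤ) * p j) = A i j * M k j := by
      intro j
      rw [← zsmul_eq_mul, MvPolynomial.coeff_smul, smul_eq_mul]
    rw [Finset.sum_congr rfl fun j _ => hterm j] at h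
    rw [MvPolynomial.coeff_X'] at h
    have hone : (if (Finsupp.single i 1 : Fin n →₀ ℕ) = Finsupp.single k 1 then (1:ℤ) else 0)
        = if i = k then 1 else 0 := by
      congr 1
      simp [Finsupp.single_left_inj (one_ne_zero : (1:ℕ) ≠ 0)]
    rw [hone] at h
    rw [Matrix.mul_apply, Matrix.one_apply]
    have htr : ∑ j, A i j * M.transpose j k = ∑ j, A i j * M k j :=
      Finset.sum_congr rfl fun j _ => by rw [Matrix.transpose_apply]
    rw [htr]
    exact (sub_eq_zero.mp h).symm
  have hdetM : M.det = 0 := by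
    have hMT : M.transpose = -M := by
      ext i k
      rw [Matrix.transpose_apply, Matrix.neg_apply]
      have := hskew i k; omega
    have h1 : M.det = -M.det := by
      calc M.det = M.transpose.det := (Matrix.det_transpose M).symm
        _ = (-M).det := by rw [hMT]
        _ = (-1) ^ Fintype.card (Fin n) * M.det := Matrix.det_neg M
        _ = -M.det := by rw [Fintype.card_fin, Odd.neg_one_pow hn]; ring
    omega
  have hfin := congrArg Matrix.det hAM
  rw [Matrix.det_mul, Matrix.det_transpose, hdetM, mul_zero, Matrix.det_one] at hfin
  exact zero_ne_one hfin
end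

section
/- If u is a Δ-primitive element of the free metabelian group M_n (i.e., its abelianized Fox derivatives generate the augmentation ideal Δ of Z[Z^n]), then u lies in the commutator subgroup M_n'. -/
/-- A "derivation-like" linear map `Z[Z^n] → Z^n` sending `single g c` to `c • toAdd g`.
It kills `Δ²` and detects the group element: `D (of g - 1) = toAdd g`. -/
noncomputable def D (n : ℕ) : MonoidAlgebra ℤ (Multiplicative (Fin n → ℤ)) →ₗ[ℤ] (Fin n → ℤ) :=
  Finsupp.linearCombination ℤ (Multiplicative.toAdd) ∘ₗ
    (MonoidAlgebra.coeffLinearEquiv ℤ).toLinearMap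

lemma D_single (n : ℕ) (g : Multiplicative (Fin n → ℤ)) (c : ℤ) :
    D n (MonoidAlgebra.single g c) = c • g.toAdd :=
  Finsupp.linearCombination_single ℤ (v := Multiplicative.toAdd) c g

lemma augA_single (n : ℕ) (g : Multiplicative (Fin n → ℤ)) (c : ℤ) :
    augA n (MonoidAlgebra.single g c) = c := by
  simp [augA, MonoidAlgebra.lift_single]

lemma D_mul_of (n : ℕ) (e : MonoidAlgebra ℤ (Multiplicative (Fin n → ℤ)))
    (g : Multiplicative (Fin n → ℤ)) :
    D n (e * MonoidAlgebra.of ℤ _ g) = D n e + (augA n e) • g.toAdd := by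
  induction e using MonoidAlgebra.induction_linear with
  | zero => simp
  | add a b ha hb =>
      rw [add_mul, map_add, ha, hb, map_add, map_add, add_smul]; abel
  | single h c =>
      rw [MonoidAlgebra.of_apply, MonoidAlgebra.single_mul_single, D_single, D_single, augA_single]
      simp [mul_smul, smul_add]

lemma D_mul_sub (n : ℕ) (e : MonoidAlgebra ℤ (Multiplicative (Fin n → ℤ)))
    (g : Multiplicative (Fin n → ℤ)) (he : augA n e = 0) :
    D n (e * (MonoidAlgebra.of ℤ _ g - 1)) = 0 := by
  rw [mul_sub, mul_one, map_sub, D_mul_of, he, zero_smul, add_zero, sub_self]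

/-- Comparison homomorphism `Z^n →* Abelianization F_n`. -/
noncomputable def phi (n : ℕ) :
    Multiplicative (Fin n → ℤ) →* Abelianization (FreeGroup (Fin n)) where
  toFun m := ∏ i, (Abelianization.of (FreeGroup.of i)) ^ (m.toAdd i)
  map_one' := by simp
  map_mul' a b := by
    simp only [toAdd_mul, Pi.add_apply, zpow_add, Finset.prod_mul_distrib]

lemma phi_abel (n : ℕ) (w : FreeGroup (Fin n)) :
    phi n (abel n w) = Abelianization.of w := by
  have : (phi n).comp (abel n) = Abelianization.of := by
    apply FreeGroup.ext_hom
    intro i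
    simp only [MonoidHom.comp_apply, abel, FreeGroup.lift_apply_of]
    show ∏ j, (Abelianization.of (FreeGroup.of j)) ^ ((Pi.single i 1 : Fin n → ℤ) j) = _
    rw [Fintype.prod_eq_single i (fun j hj => by simp [Pi.single_eq_of_ne hj])]
    simp
  exact DFunLike.congr_fun this w

/-- If `u` is a `Δ`-primitive element of the free metabelian group `M_n` (its
abelianized Fox derivatives generate the augmentation ideal of `Z[Z^n]`), then `u`
lies in the commutator subgroup `M_n'`; equivalently, a representative `u ∈ F_n` lies
in the commutator subgroup of `F_n`. -/
theorem stmt16 (n : ℕ)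
    (d : MonoidAlgebra ℤ (FreeGroup (Fin n)) → Fin n →
      MonoidAlgebra ℤ (FreeGroup (Fin n)))
    (hd : ∀ a : MonoidAlgebra ℤ (FreeGroup (Fin n)),
      a = algebraMap ℤ (MonoidAlgebra ℤ (FreeGroup (Fin n))) (aug n a) +
        ∑ j : Fin n, d a j *
          (MonoidAlgebra.of ℤ (FreeGroup (Fin n)) (FreeGroup.of j) - 1))
    (u : FreeGroup (Fin n))
    (hu : Ideal.span (Set.range fun i =>
        abelRing n (d (MonoidAlgebra.of ℤ (FreeGroup (Fin n)) u) i)) =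
      RingHom.ker (augA n).toRingHom) :
    u ∈ commutator (FreeGroup (Fin n)) := by
  -- the abelianized Fox derivatives of `u`
  set e : Fin n → MonoidAlgebra ℤ (Multiplicative (Fin n → ℤ)) :=
    fun i => abelRing n (d (MonoidAlgebra.of ℤ (FreeGroup (Fin n)) u) i) with he
  -- each derivative lies in the augmentation ideal
  have heker : ∀ i, augA n (e i) = 0 := by
    intro i
    have : e i ∈ Ideal.span (Set.range fun i =>
        abelRing n (d (MonoidAlgebra.of ℤ (FreeGroup (Fin n)) u) i)) :=
      Ideal.subset_span ⟨i, rfl⟩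
    rw [hu] at this
    exact this
  -- augmentation of a group element is 1
  have haug : aug n (MonoidAlgebra.of ℤ (FreeGroup (Fin n)) u) = 1 := by
    simp [aug, MonoidAlgebra.of_apply, MonoidAlgebra.lift_single]
  -- map the Fox expansion of `u` to `Z[Z^n]`
  have hE := congrArg (abelRing n) (hd (MonoidAlgebra.of ℤ (FreeGroup (Fin n)) u))
  rw [haug, map_one, map_add, map_one] at hE
  have habelof : ∀ w : FreeGroup (Fin n),
      abelRing n (MonoidAlgebra.of ℤ (FreeGroup (Fin n)) w) =
        MonoidAlgebra.of ℤ (Multiplicative (Fin n → ℤ)) (abel n w) := by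
    intro w
    simp [abelRing, MonoidAlgebra.mapDomainRingHom, MonoidAlgebra.of_apply,
      Finsupp.mapDomain_single]
  rw [habelof, map_sum] at hE
  have hE' : MonoidAlgebra.of ℤ (Multiplicative (Fin n → ℤ)) (abel n u) =
      1 + ∑ j : Fin n, e j * (MonoidAlgebra.of ℤ (Multiplicative (Fin n → ℤ))
        (abel n (FreeGroup.of j)) - 1) := by
    rw [hE]
    congr 1
    refine Finset.sum_congr rfl fun j _ => ?_
    rw [map_mul, map_sub, map_one, habelof]
  -- apply `D`
  have hD := congrArg (D n) hE'
  rw [map_add, map_sum] at hD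
  have hDsum : ∀ j ∈ Finset.univ, D n (e j * (MonoidAlgebra.of ℤ (Multiplicative (Fin n → ℤ))
      (abel n (FreeGroup.of j)) - 1)) = 0 := fun j _ => D_mul_sub n _ _ (heker j)
  rw [Finset.sum_eq_zero hDsum] at hD
  have hD1 : D n (1 : MonoidAlgebra ℤ (Multiplicative (Fin n → ℤ))) = 0 := by
    have : (1 : MonoidAlgebra ℤ (Multiplicative (Fin n → ℤ))) = MonoidAlgebra.single 1 1 := rfl
    rw [this, D_single]; simp
  rw [hD1, add_zero, MonoidAlgebra.of_apply, D_single, one_smul] at hD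
  -- conclude `abel n u = 1`
  have habel1 : abel n u = 1 := by
    have := hD
    rwa [show (Multiplicative.toAdd (abel n u) = 0) ↔ abel n u = 1 from
      ⟨fun h => by simpa using congrArg Multiplicative.ofAdd h, fun h => by rw [h]; rfl⟩] at this
  -- hence `u` dies in the abelianization
  have : Abelianization.of u = 1 := by
    rw [← phi_abel n u, habel1, map_one]
  exact (QuotientGroup.eq_one_iff u).mp this
end
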